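/- arXiv:2412.20362 — 6 statements merged into one kernel-verified Lean document; each statement's English description precedes it below -/
import Mathlib

section
/- The space X = {x : (−∞, t0+σ] → ℝ^n : x_{t0} ∈ 𝓑 and x|_{[t0, t0+σ]} is regulated}, equipped with the norm ‖x‖_X = ‖x_{t0}‖_𝓑 + sup_{u ∈ [t0, t0+σ]}‖x(u)‖, is a Banach space. -/
open MeasureTheory Filter Set

noncomputable section

/-- `ℝ^n`. -/
abbrev Eu (n : ℕ) := EuclideanSpace ℝ (Fin n)

/-- The history (segment) of `y` at time `t`: `(history y t) θ = y (t + θ)`. -/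
def history {E : Type*} (y : ℝ → E) (t : ℝ) : ℝ → E := fun θ => y (t + θ)

/-- `f` is regulated on the interval `[a, b]`: it has a left limit (within the
interval) at every point of `(a, b]` and a right limit at every point of `[a, b)`. -/
def RegulatedOnIcc {E : Type*} [TopologicalSpace E] (f : ℝ → E) (a b : ℝ) : Prop :=
  (∀ t ∈ Set.Ioc a b, ∃ l : E, Filter.Tendsto f (nhdsWithin t (Set.Ico a t)) (nhds l)) ∧
  (∀ t ∈ Set.Ico a b, ∃ l : E, Filter.Tendsto f (nhdsWithin t (Set.Ioc t b)) (nhds l))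

/-- `f` is regulated on `(-∞, 0]`: it has a left limit at every point `t ≤ 0` and
a right limit at every point `t < 0`. -/
def RegulatedOnIic0 {E : Type*} [TopologicalSpace E] (f : ℝ → E) : Prop :=
  (∀ t ≤ (0:ℝ), ∃ l : E, Filter.Tendsto f (nhdsWithin t (Set.Iio t)) (nhds l)) ∧
  (∀ t < (0:ℝ), ∃ l : E, Filter.Tendsto f (nhdsWithin t (Set.Ioo t 0)) (nhds l))

/-- A phase space: a Banach space `𝓑` of regulated functions `(-∞,0] → E`
(modelled as functions `ℝ → E` whose membership and norm only depend on the
restriction to `(-∞,0]`), satisfying axioms (A1) (completeness), (A2) and (A3). -/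
structure PhaseSpace (E : Type*) [NormedAddCommGroup E] [NormedSpace ℝ E] where
  /-- membership in `𝓑` -/
  mem : (ℝ → E) → Prop
  /-- the norm `‖·‖_𝓑` -/
  nrm : (ℝ → E) → ℝ
  regulated' : ∀ φ, mem φ → RegulatedOnIic0 φ
  zero_mem : mem 0
  add_mem : ∀ φ ψ, mem φ → mem ψ → mem (φ + ψ)
  smul_mem : ∀ (c : ℝ) (φ), mem φ → mem (c • φ)
  mem_congr : ∀ φ ψ, mem φ → Set.EqOn φ ψ (Set.Iic 0) → mem ψ
  nrm_congr : ∀ φ ψ, Set.EqOn φ ψ (Set.Iic 0) → nrm φ = nrm ψ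
  nrm_nonneg : ∀ φ, 0 ≤ nrm φ
  nrm_eq_zero : ∀ φ, mem φ → nrm φ = 0 → ∀ θ ≤ (0:ℝ), φ θ = 0
  nrm_add_le : ∀ φ ψ, nrm (φ + ψ) ≤ nrm φ + nrm ψ
  nrm_smul : ∀ (c : ℝ) (φ), nrm (c • φ) = |c| * nrm φ
  /-- (A1): completeness of `𝓑`. -/
  complete' : ∀ u : ℕ → (ℝ → E), (∀ k, mem (u k)) →
    (∀ ε > (0:ℝ), ∃ N, ∀ m ≥ N, ∀ k ≥ N, nrm (u m - u k) < ε) →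
    ∃ φ, mem φ ∧ Filter.Tendsto (fun k => nrm (u k - φ)) Filter.atTop (nhds 0)
  /-- the function `k₁` of axiom (A2) -/
  k1 : ℝ → ℝ
  /-- the function `k₂` of axiom (A2) -/
  k2 : ℝ → ℝ
  /-- the function `k₃` of axiom (A2) -/
  k3 : ℝ → ℝ
  k1_pos : ∀ t, 0 ≤ t → 0 < k1 t
  k2_pos : ∀ t, 0 ≤ t → 0 < k2 t
  k3_pos : ∀ t, 0 ≤ t → 0 < k3 t
  k1_locBdd : ∀ r, 0 ≤ r → BddAbove (k1 '' Set.Icc 0 r)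
  k2_locBdd : ∀ r, 0 ≤ r → BddAbove (k2 '' Set.Icc 0 r)
  k3_locBdd : ∀ r, 0 ≤ r → BddAbove (k3 '' Set.Icc 0 r)
  /-- Axiom (A2). -/
  axiomA2 : ∀ (t0 σ : ℝ), 0 < σ → ∀ y : ℝ → E,
    RegulatedOnIcc y t0 (t0 + σ) → mem (history y t0) →
    ∀ t ∈ Set.Icc t0 (t0 + σ),
      mem (history y t) ∧
      ‖y t‖ ≤ k1 (t - t0) * nrm (history y t) ∧
      nrm (history y t) ≤ k2 (t - t0) * nrm (history y t0) +
        k3 (t - t0) * sSup ((fun u => ‖y u‖) '' Set.Icc t0 t)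
  /-- the function `k` of axiom (A3) -/
  k0 : ℝ → ℝ
  k0_cont : Continuous k0
  k0_zero : k0 0 = 0
  /-- Axiom (A3): for `t ≥ 0`, any function `ψ` built from `φ ∈ 𝓑` as
  `ψ 0 = φ 0`, `ψ θ = φ(0⁻)` for `-t ≤ θ < 0` and `ψ θ = φ (t + θ)` for `θ < -t`
  belongs to `𝓑` with `‖ψ‖_𝓑 ≤ (1 + k t) ‖φ‖_𝓑`. -/
  axiomA3 : ∀ t, 0 ≤ t → ∀ φ : ℝ → E, mem φ → ∀ φ0 : E,
    Filter.Tendsto φ (nhdsWithin 0 (Set.Iio 0)) (nhds φ0) →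
    ∀ ψ : ℝ → E, ψ 0 = φ 0 → (∀ θ, -t ≤ θ → θ < 0 → ψ θ = φ0) →
    (∀ θ, θ < -t → ψ θ = φ (t + θ)) →
    mem ψ ∧ nrm ψ ≤ (1 + k0 t) * nrm φ

/-- Membership in the space `X` of functions `(-∞, t0+σ] → E` with `x_{t0} ∈ 𝓑`
and `x` regulated on `[t0, t0+σ]`. -/
def memX {E : Type*} [NormedAddCommGroup E] [NormedSpace ℝ E]
    (P : PhaseSpace E) (t0 σ : ℝ) (x : ℝ → E) : Prop :=
  P.mem (history x t0) ∧ RegulatedOnIcc x t0 (t0 + σ)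

/-- The norm `‖x‖_X = ‖x_{t0}‖_𝓑 + sup_{u ∈ [t0, t0+σ]} ‖x u‖`. -/
def normX {E : Type*} [NormedAddCommGroup E] [NormedSpace ℝ E]
    (P : PhaseSpace E) (t0 σ : ℝ) (x : ℝ → E) : ℝ :=
  P.nrm (history x t0) + sSup ((fun u => ‖x u‖) '' Set.Icc t0 (t0 + σ))

section Helpers

variable {E : Type*} [NormedAddCommGroup E] [NormedSpace ℝ E]

lemma reg_zero (a b : ℝ) : RegulatedOnIcc (0 : ℝ → E) a b :=
  ⟨fun _ _ => ⟨0, tendsto_const_nhds⟩, fun _ _ => ⟨0, tendsto_const_nhds⟩⟩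

lemma reg_add {f g : ℝ → E} {a b : ℝ} (hf : RegulatedOnIcc f a b)
    (hg : RegulatedOnIcc g a b) : RegulatedOnIcc (f + g) a b := by
  constructor
  · intro t ht
    obtain ⟨l1, h1⟩ := hf.1 t ht
    obtain ⟨l2, h2⟩ := hg.1 t ht
    exact ⟨l1 + l2, h1.add h2⟩
  · intro t ht
    obtain ⟨l1, h1⟩ := hf.2 t ht
    obtain ⟨l2, h2⟩ := hg.2 t ht
    exact ⟨l1 + l2, h1.add h2⟩

lemma reg_sub {f g : ℝ → E} {a b : ℝ} (hf : RegulatedOnIcc f a b)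
    (hg : RegulatedOnIcc g a b) : RegulatedOnIcc (f - g) a b := by
  constructor
  · intro t ht
    obtain ⟨l1, h1⟩ := hf.1 t ht
    obtain ⟨l2, h2⟩ := hg.1 t ht
    exact ⟨l1 - l2, h1.sub h2⟩
  · intro t ht
    obtain ⟨l1, h1⟩ := hf.2 t ht
    obtain ⟨l2, h2⟩ := hg.2 t ht
    exact ⟨l1 - l2, h1.sub h2⟩

lemma reg_smul {f : ℝ → E} {a b : ℝ} (c : ℝ) (hf : RegulatedOnIcc f a b) :
    RegulatedOnIcc (c • f) a b := by
  constructor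
  · intro t ht
    obtain ⟨l1, h1⟩ := hf.1 t ht
    exact ⟨c • l1, h1.const_smul c⟩
  · intro t ht
    obtain ⟨l1, h1⟩ := hf.2 t ht
    exact ⟨c • l1, h1.const_smul c⟩

lemma bddAbove_regulated {f : ℝ → E} {a b : ℝ} (hf : RegulatedOnIcc f a b) :
    BddAbove ((fun u => ‖f u‖) '' Set.Icc a b) := by
  rcases (Set.Icc a b).eq_empty_or_nonempty with h | h
  · rw [h, Set.image_empty]; exact bddAbove_empty
  have loc : ∀ t ∈ Set.Icc a b, ∃ U : Set ℝ, U ∈ nhds t ∧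
      ∃ M, ∀ s ∈ U ∩ Set.Icc a b, ‖f s‖ ≤ M := by
    intro t ht
    have hL : ∃ V ∈ nhds t, ∃ M, ∀ s ∈ V, s ∈ Set.Ico a t → ‖f s‖ ≤ M := by
      rcases lt_or_ge a t with h' | h'
      · obtain ⟨l, hl⟩ := hf.1 t ⟨h', ht.2⟩
        have h2 : ∀ᶠ s in nhdsWithin t (Set.Ico a t), ‖f s‖ ≤ ‖l‖ + 1 :=
          hl.norm.eventually_le_const (lt_add_one _)
        rw [eventually_nhdsWithin_iff] at h2
        obtain ⟨V, hV, hVp⟩ := Filter.eventually_iff_exists_mem.1 h2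
        exact ⟨V, hV, ‖l‖ + 1, fun s hs hs' => hVp s hs hs'⟩
      · exact ⟨Set.univ, Filter.univ_mem, 0,
          fun s _ hs' => absurd (hs'.2.trans_le h') (not_lt.2 hs'.1)⟩
    have hR : ∃ V ∈ nhds t, ∃ M, ∀ s ∈ V, s ∈ Set.Ioc t b → ‖f s‖ ≤ M := by
      rcases lt_or_ge t b with h' | h'
      · obtain ⟨l, hl⟩ := hf.2 t ⟨ht.1, h'⟩
        have h2 : ∀ᶠ s in nhdsWithin t (Set.Ioc t b), ‖f s‖ ≤ ‖l‖ + 1 :=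
          hl.norm.eventually_le_const (lt_add_one _)
        rw [eventually_nhdsWithin_iff] at h2
        obtain ⟨V, hV, hVp⟩ := Filter.eventually_iff_exists_mem.1 h2
        exact ⟨V, hV, ‖l‖ + 1, fun s hs hs' => hVp s hs hs'⟩
      · exact ⟨Set.univ, Filter.univ_mem, 0,
          fun s _ hs' => absurd (h'.trans_lt hs'.1) (not_lt.2 hs'.2)⟩
    obtain ⟨V1, hV1, M1, h1⟩ := hL
    obtain ⟨V2, hV2, M2, h2⟩ := hR
    refine ⟨V1 ∩ V2, Filter.inter_mem hV1 hV2, max (max M1 M2) ‖f t‖, ?_⟩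
    rintro s ⟨⟨hs1, hs2⟩, hsI⟩
    rcases lt_trichotomy s t with h' | h' | h'
    · exact le_trans (h1 s hs1 ⟨hsI.1, h'⟩) (le_trans (le_max_left _ _) (le_max_left _ _))
    · rw [h']; exact le_max_right _ _
    · exact le_trans (h2 s hs2 ⟨h', hsI.2⟩) (le_trans (le_max_right _ _) (le_max_left _ _))
  choose U hU M hM using loc
  obtain ⟨T, hT⟩ := isCompact_Icc.elim_nhds_subcover' U hU
  have hsub : ((fun u => ‖f u‖) '' Set.Icc a b) ⊆
      ⋃ x ∈ T, (fun u => ‖f u‖) '' (U x.1 x.2 ∩ Set.Icc a b) := by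
    rintro _ ⟨s, hs, rfl⟩
    obtain ⟨x, hxT, hx⟩ := Set.mem_iUnion₂.1 (hT hs)
    exact Set.mem_iUnion₂.2 ⟨x, hxT, Set.mem_image_of_mem _ ⟨hx, hs⟩⟩
  have hbig : BddAbove (⋃ x ∈ T, (fun u => ‖f u‖) '' (U x.1 x.2 ∩ Set.Icc a b)) := by
    rw [← Finset.set_biUnion_coe, Set.Finite.bddAbove_biUnion T.finite_toSet]
    intro x _
    exact ⟨M x.1 x.2, by rintro _ ⟨s, hs, rfl⟩; exact hM x.1 x.2 s hs⟩
  exact hbig.mono hsub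

lemma exists_lim_of_unif {E : Type*} [NormedAddCommGroup E] [CompleteSpace E]
    {g : ℝ → E} {S D : Set ℝ} {F : Filter ℝ} [hF : F.NeBot] (hDF : D ∈ F) (hDS : D ⊆ S)
    (H : ∀ ε > (0:ℝ), ∃ v : ℝ → E, (∃ l, Filter.Tendsto v F (nhds l)) ∧
      ∀ s ∈ S, ‖v s - g s‖ ≤ ε) :
    ∃ l, Filter.Tendsto g F (nhds l) := by
  have hc : Cauchy (Filter.map g F) := by
    rw [Metric.cauchy_iff]
    refine ⟨Filter.map_neBot, fun ε hε => ?_⟩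
    obtain ⟨v, ⟨l, hl⟩, hv⟩ := H (ε/5) (by linarith)
    have hb : v ⁻¹' Metric.ball l (ε/5) ∈ F := hl (Metric.ball_mem_nhds l (by linarith))
    refine ⟨g '' (v ⁻¹' Metric.ball l (ε/5) ∩ D),
      Filter.image_mem_map (Filter.inter_mem hb hDF), ?_⟩
    rintro _ ⟨s, ⟨hs1, hs2⟩, rfl⟩ _ ⟨s', ⟨hs1', hs2'⟩, rfl⟩
    have e1 : dist (g s) (v s) ≤ ε/5 := by
      rw [dist_eq_norm, norm_sub_rev]; exact hv s (hDS hs2)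
    have e2 : dist (v s') (g s') ≤ ε/5 := by
      rw [dist_eq_norm]; exact hv s' (hDS hs2')
    have d1 : dist (v s) l < ε/5 := Metric.mem_ball.1 hs1
    have d2 : dist l (v s') < ε/5 := by rw [dist_comm]; exact Metric.mem_ball.1 hs1'
    have t1 : dist (g s) (g s') ≤ dist (g s) l + dist l (g s') := dist_triangle _ _ _
    have t2 : dist (g s) l ≤ dist (g s) (v s) + dist (v s) l := dist_triangle _ _ _
    have t3 : dist l (g s') ≤ dist l (v s') + dist (v s') (g s') := dist_triangle _ _ _
    linarith
  exact CompleteSpace.complete hc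

lemma nrm_point (P : PhaseSpace E) (ψ : ℝ → E) (hψ : P.mem ψ) :
    ‖ψ 0‖ ≤ P.k1 0 * P.nrm ψ := by
  set y : ℝ → E := fun t => ψ (min t 0) with hy
  have hy0 : Set.EqOn ψ (history y 0) (Set.Iic 0) := by
    intro θ hθ
    simp [history, hy, min_eq_left (Set.mem_Iic.1 hθ)]
  have hmem : P.mem (history y 0) := P.mem_congr ψ _ hψ hy0
  have hreg : RegulatedOnIcc y 0 (0 + 1) := by
    constructor
    · intro t ht
      refine ⟨ψ 0, Filter.Tendsto.congr' ?_ tendsto_const_nhds⟩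
      filter_upwards [self_mem_nhdsWithin] with s hs
      simp [hy, min_eq_right hs.1]
    · intro t ht
      refine ⟨ψ 0, Filter.Tendsto.congr' ?_ tendsto_const_nhds⟩
      filter_upwards [self_mem_nhdsWithin] with s hs
      simp [hy, min_eq_right (le_trans ht.1 hs.1.le)]
  obtain ⟨-, h1, -⟩ := P.axiomA2 0 1 one_pos y hreg hmem 0 ⟨le_rfl, by norm_num⟩
  rw [← P.nrm_congr ψ (history y 0) hy0] at h1
  simpa [hy] using h1

end Helpers

/-- the space `X` with the norm
`‖x‖_X = ‖x_{t0}‖_𝓑 + sup_{u ∈ [t0,t0+σ]} ‖x u‖` is a Banach space: it is a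
vector subspace, `normX` is a norm on it, and it is complete. -/
theorem X_is_Banach (n : ℕ) (t0 σ : ℝ) (hσ : 0 < σ) (P : PhaseSpace (Eu n)) :
    -- `X` is a vector subspace
    memX P t0 σ 0 ∧
    (∀ x y : ℝ → Eu n, memX P t0 σ x → memX P t0 σ y → memX P t0 σ (x + y)) ∧
    (∀ (c : ℝ) (x : ℝ → Eu n), memX P t0 σ x → memX P t0 σ (c • x)) ∧
    -- `normX` is a norm on `X`
    (∀ x : ℝ → Eu n, memX P t0 σ x → 0 ≤ normX P t0 σ x) ∧
    (∀ x y : ℝ → Eu n, memX P t0 σ x → memX P t0 σ y →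
      normX P t0 σ (x + y) ≤ normX P t0 σ x + normX P t0 σ y) ∧
    (∀ (c : ℝ) (x : ℝ → Eu n), memX P t0 σ x →
      normX P t0 σ (c • x) = |c| * normX P t0 σ x) ∧
    (∀ x : ℝ → Eu n, memX P t0 σ x → normX P t0 σ x = 0 → ∀ t ≤ t0 + σ, x t = 0) ∧
    -- `X` is complete
    (∀ u : ℕ → ℝ → Eu n, (∀ k, memX P t0 σ (u k)) →
      (∀ ε > (0:ℝ), ∃ N : ℕ, ∀ m ≥ N, ∀ k ≥ N, normX P t0 σ (u m - u k) < ε) →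
      ∃ x : ℝ → Eu n, memX P t0 σ x ∧
        Filter.Tendsto (fun k => normX P t0 σ (u k - x)) Filter.atTop (nhds 0)) := by
  have hS0 : t0 ∈ Set.Icc t0 (t0 + σ) := ⟨le_rfl, by linarith⟩
  have hSupNN : ∀ x : ℝ → Eu n, RegulatedOnIcc x t0 (t0 + σ) →
      0 ≤ sSup ((fun u => ‖x u‖) '' Set.Icc t0 (t0 + σ)) := by
    intro x hx
    exact le_trans (norm_nonneg _) (le_csSup (bddAbove_regulated hx) ⟨t0, hS0, rfl⟩)
  refine ⟨?_, ?_, ?_, ?_, ?_, ?_, ?_, ?_⟩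
  · exact ⟨P.zero_mem, reg_zero _ _⟩
  · exact fun x y hx hy => ⟨P.add_mem _ _ hx.1 hy.1, reg_add hx.2 hy.2⟩
  · exact fun c x hx => ⟨P.smul_mem c _ hx.1, reg_smul c hx.2⟩
  · intro x hx
    exact add_nonneg (P.nrm_nonneg _) (hSupNN x hx.2)
  · intro x y hx hy
    unfold normX
    have h1 : P.nrm (history (x + y) t0) ≤ P.nrm (history x t0) + P.nrm (history y t0) :=
      P.nrm_add_le _ _
    have h2 : sSup ((fun u => ‖(x + y) u‖) '' Set.Icc t0 (t0 + σ)) ≤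
        sSup ((fun u => ‖x u‖) '' Set.Icc t0 (t0 + σ)) +
        sSup ((fun u => ‖y u‖) '' Set.Icc t0 (t0 + σ)) := by
      apply Real.sSup_le
      · rintro _ ⟨s, hs, rfl⟩
        have hx' : ‖x s‖ ≤ sSup ((fun u => ‖x u‖) '' Set.Icc t0 (t0 + σ)) :=
          le_csSup (bddAbove_regulated hx.2) ⟨s, hs, rfl⟩
        have hy' : ‖y s‖ ≤ sSup ((fun u => ‖y u‖) '' Set.Icc t0 (t0 + σ)) :=
          le_csSup (bddAbove_regulated hy.2) ⟨s, hs, rfl⟩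
        calc ‖(x + y) s‖ = ‖x s + y s‖ := rfl
        _ ≤ ‖x s‖ + ‖y s‖ := norm_add_le _ _
        _ ≤ _ := add_le_add hx' hy'
      · exact add_nonneg (hSupNN x hx.2) (hSupNN y hy.2)
    linarith
  · intro c x hx
    unfold normX
    have h1 : history (c • x) t0 = c • history x t0 := rfl
    rw [h1, P.nrm_smul]
    have h2 : (fun u => ‖(c • x) u‖) = (fun r => |c| • r) ∘ (fun u => ‖x u‖) := by
      funext s
      simp [norm_smul, Real.norm_eq_abs, smul_eq_mul]
    rw [h2, Set.image_comp, Set.image_smul, Real.sSup_smul_of_nonneg (abs_nonneg c),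
      smul_eq_mul, mul_add]
  · intro x hx hx0 t ht
    have hnn1 := P.nrm_nonneg (history x t0)
    have hnn2 := hSupNN x hx.2
    unfold normX at hx0
    have h1 : P.nrm (history x t0) = 0 := by linarith
    have h2 : sSup ((fun u => ‖x u‖) '' Set.Icc t0 (t0 + σ)) = 0 := by linarith
    rcases le_or_gt t t0 with h | h
    · have h3 := P.nrm_eq_zero _ hx.1 h1 (t - t0) (by linarith)
      have h4 : t0 + (t - t0) = t := by ring
      rw [← h4]
      exact h3
    · have hmemI : t ∈ Set.Icc t0 (t0 + σ) := ⟨h.le, ht⟩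
      have h5 : ‖x t‖ ≤ sSup ((fun u => ‖x u‖) '' Set.Icc t0 (t0 + σ)) :=
        le_csSup (bddAbove_regulated hx.2) ⟨t, hmemI, rfl⟩
      rw [h2] at h5
      exact norm_le_zero_iff.1 h5
  · intro u hu hc
    have hregd : ∀ m k, RegulatedOnIcc (u m - u k) t0 (t0 + σ) :=
      fun m k => reg_sub (hu m).2 (hu k).2
    have hbddd : ∀ m k, BddAbove ((fun s => ‖(u m - u k) s‖) '' Set.Icc t0 (t0 + σ)) :=
      fun m k => bddAbove_regulated (hregd m k)
    have hptle : ∀ m k, ∀ s ∈ Set.Icc t0 (t0 + σ),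
        ‖u m s - u k s‖ ≤ normX P t0 σ (u m - u k) := by
      intro m k s hs
      have h1 : ‖u m s - u k s‖ ≤
          sSup ((fun s => ‖(u m - u k) s‖) '' Set.Icc t0 (t0 + σ)) :=
        le_csSup (hbddd m k) ⟨s, hs, rfl⟩
      have h2 : 0 ≤ P.nrm (history (u m - u k) t0) := P.nrm_nonneg _
      unfold normX
      linarith
    have hhist_le : ∀ m k, P.nrm (history (u m) t0 - history (u k) t0) ≤
        normX P t0 σ (u m - u k) := by
      intro m k
      have h1 : 0 ≤ sSup ((fun s => ‖(u m - u k) s‖) '' Set.Icc t0 (t0 + σ)) :=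
        le_trans (norm_nonneg _) (le_csSup (hbddd m k) ⟨t0, hS0, rfl⟩)
      have h2 : P.nrm (history (u m) t0 - history (u k) t0)
          = P.nrm (history (u m - u k) t0) := rfl
      unfold normX
      rw [h2]
      linarith
    obtain ⟨φ, hφmem, hφ⟩ := P.complete' (fun k => history (u k) t0) (fun k => (hu k).1) (by
      intro ε hε
      obtain ⟨N, hN⟩ := hc ε hε
      exact ⟨N, fun m hm k hk => lt_of_le_of_lt (hhist_le m k) (hN m hm k hk)⟩)
    have hcs : ∀ s ∈ Set.Icc t0 (t0 + σ),
        ∃ l : Eu n, Filter.Tendsto (fun k => u k s) Filter.atTop (nhds l) := by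
      intro s hs
      have hcau : CauchySeq (fun k => u k s) := by
        rw [Metric.cauchySeq_iff]
        intro ε hε
        obtain ⟨N, hN⟩ := hc ε hε
        refine ⟨N, fun m hm k hk => ?_⟩
        rw [dist_eq_norm]
        exact lt_of_le_of_lt (hptle m k s hs) (hN m hm k hk)
      exact cauchySeq_tendsto_of_complete hcau
    set g : ℝ → Eu n := fun s => limUnder Filter.atTop (fun k => u k s) with hgdef
    have hg : ∀ s ∈ Set.Icc t0 (t0 + σ),
        Filter.Tendsto (fun k => u k s) Filter.atTop (nhds (g s)) := by
      intro s hs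
      obtain ⟨l, hl⟩ := hcs s hs
      have hgl : g s = l := hl.limUnder_eq
      rw [hgl]
      exact hl
    have hunif : ∀ ε > (0:ℝ), ∃ N, ∀ k ≥ N, ∀ s ∈ Set.Icc t0 (t0 + σ),
        ‖u k s - g s‖ ≤ ε := by
      intro ε hε
      obtain ⟨N, hN⟩ := hc ε hε
      refine ⟨N, fun k hk s hs => ?_⟩
      have hlim : Filter.Tendsto (fun m => ‖u k s - u m s‖) Filter.atTop
          (nhds ‖u k s - g s‖) := (tendsto_const_nhds.sub (hg s hs)).norm
      refine le_of_tendsto hlim ?_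
      filter_upwards [Filter.eventually_ge_atTop N] with m hm
      exact (lt_of_le_of_lt (hptle k m s hs) (hN k hk m hm)).le
    have hφ0 : Filter.Tendsto (fun k => u k t0) Filter.atTop (nhds (φ 0)) := by
      have hb : ∀ k, ‖u k t0 - φ 0‖ ≤ P.k1 0 * P.nrm (history (u k) t0 - φ) := by
        intro k
        have h1 := P.smul_mem (-1) φ hφmem
        have h2 : (-1 : ℝ) • φ = -φ := by funext θ; simp
        rw [h2] at h1
        have h3 := P.add_mem _ _ (hu k).1 h1
        have h4 : history (u k) t0 + -φ = history (u k) t0 - φ := by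
          funext θ; simp [sub_eq_add_neg]
        rw [h4] at h3
        have h5 := nrm_point P _ h3
        have h6 : (history (u k) t0 - φ) 0 = u k t0 - φ 0 := by
          show u k (t0 + 0) - φ 0 = u k t0 - φ 0
          rw [add_zero]
        rwa [h6] at h5
      rw [tendsto_iff_norm_sub_tendsto_zero]
      have hmul : Filter.Tendsto (fun k => P.k1 0 * P.nrm (history (u k) t0 - φ))
          Filter.atTop (nhds 0) := by
        simpa using hφ.const_mul (P.k1 0)
      exact squeeze_zero (fun k => norm_nonneg _) hb hmul
    set x : ℝ → Eu n := fun s => if s < t0 then φ (s - t0) else g s with hxdef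
    have hgt0 : g t0 = φ 0 := tendsto_nhds_unique (hg t0 hS0) hφ0
    have hxS : ∀ s, t0 ≤ s → x s = g s := by
      intro s hs
      show (if s < t0 then φ (s - t0) else g s) = g s
      exact if_neg (not_lt.2 hs)
    have hxIic : ∀ θ ≤ (0:ℝ), x (t0 + θ) = φ θ := by
      intro θ hθ
      rcases lt_or_eq_of_le hθ with h | h
      · have h1 : t0 + θ < t0 := by linarith
        show (if t0 + θ < t0 then φ (t0 + θ - t0) else g (t0 + θ)) = φ θ
        rw [if_pos h1]
        congr 1
        ring
      · rw [h]
        show (if t0 + 0 < t0 then φ (t0 + 0 - t0) else g (t0 + 0)) = φ 0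
        rw [if_neg (by linarith), add_zero, hgt0]
    have hxmem : P.mem (history x t0) :=
      P.mem_congr φ _ hφmem (fun θ hθ => (hxIic θ hθ).symm)
    have hxreg : RegulatedOnIcc x t0 (t0 + σ) := by
      constructor
      · intro t ht
        have hne : (nhdsWithin t (Set.Ico t0 t)).NeBot := by
          rw [← mem_closure_iff_nhdsWithin_neBot, closure_Ico (ne_of_lt ht.1)]
          exact ⟨ht.1.le, le_rfl⟩
        refine exists_lim_of_unif (D := Set.Ico t0 t) (S := Set.Icc t0 (t0 + σ))
          self_mem_nhdsWithin (fun s hs => ⟨hs.1, le_trans hs.2.le ht.2⟩) ?_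
        intro ε hε
        obtain ⟨N, hN⟩ := hunif ε hε
        refine ⟨u N, (hu N).2.1 t ht, ?_⟩
        intro s hs
        rw [hxS s hs.1]
        exact hN N le_rfl s hs
      · intro t ht
        have hne : (nhdsWithin t (Set.Ioc t (t0 + σ))).NeBot := by
          rw [← mem_closure_iff_nhdsWithin_neBot, closure_Ioc (ne_of_lt ht.2)]
          exact ⟨le_rfl, ht.2.le⟩
        refine exists_lim_of_unif (D := Set.Ioc t (t0 + σ)) (S := Set.Icc t0 (t0 + σ))
          self_mem_nhdsWithin (fun s hs => ⟨le_trans ht.1 hs.1.le, hs.2⟩) ?_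
        intro ε hε
        obtain ⟨N, hN⟩ := hunif ε hε
        refine ⟨u N, (hu N).2.2 t ht, ?_⟩
        intro s hs
        rw [hxS s hs.1]
        exact hN N le_rfl s hs
    refine ⟨x, ⟨hxmem, hxreg⟩, ?_⟩
    have hterm1 : Filter.Tendsto (fun k => P.nrm (history (u k - x) t0))
        Filter.atTop (nhds 0) := by
      have he : ∀ k, P.nrm (history (u k) t0 - φ) = P.nrm (history (u k - x) t0) := by
        intro k
        apply P.nrm_congr
        intro θ hθ
        show u k (t0 + θ) - φ θ = u k (t0 + θ) - x (t0 + θ)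
        rw [hxIic θ hθ]
      exact hφ.congr he
    have hterm2 : Filter.Tendsto
        (fun k => sSup ((fun s => ‖(u k - x) s‖) '' Set.Icc t0 (t0 + σ)))
        Filter.atTop (nhds 0) := by
      rw [Metric.tendsto_atTop]
      intro ε hε
      obtain ⟨N, hN⟩ := hunif (ε/2) (by linarith)
      refine ⟨N, fun k hk => ?_⟩
      have hub : ∀ r ∈ (fun s => ‖(u k - x) s‖) '' Set.Icc t0 (t0 + σ), r ≤ ε/2 := by
        rintro _ ⟨s, hs, rfl⟩
        show ‖u k s - x s‖ ≤ ε/2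
        rw [hxS s hs.1]
        exact hN k hk s hs
      have h1 : sSup ((fun s => ‖(u k - x) s‖) '' Set.Icc t0 (t0 + σ)) ≤ ε/2 :=
        Real.sSup_le hub (by linarith)
      have h2 : 0 ≤ sSup ((fun s => ‖(u k - x) s‖) '' Set.Icc t0 (t0 + σ)) :=
        le_trans (norm_nonneg _) (le_csSup ⟨ε/2, hub⟩ ⟨t0, hS0, rfl⟩)
      rw [Real.dist_eq, sub_zero, abs_of_nonneg h2]
      linarith
    have hsum := hterm1.add hterm2
    simpa [normX] using hsum
end
end

section
/- Under assumptions (B1)–(B6), the set A is a convex, closed, and bounded subset of X; in particular every x ∈ A satisfies ‖x‖_X ≤ ‖φ‖_𝓑 + ∫_{t0}^{t0+σ} M(s) dg(s) + ‖φ(0)‖. -/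
open MeasureTheory Filter Set

noncomputable section

/-- Membership in the set `A = {x ∈ X : x_{t0} = φ and
‖x t - φ 0‖ ≤ ∫_{t0}^{t} M dg for all t ∈ [t0, t0+σ]}`. -/
def memA {E : Type*} [NormedAddCommGroup E] [NormedSpace ℝ E]
    (P : PhaseSpace E) (t0 σ : ℝ) (φ : ℝ → E) (M : ℝ → ℝ) (μ : Measure ℝ)
    (x : ℝ → E) : Prop :=
  memX P t0 σ x ∧ (∀ θ ≤ (0:ℝ), x (t0 + θ) = φ θ) ∧
  ∀ t ∈ Set.Icc t0 (t0 + σ), ‖x t - φ 0‖ ≤ ∫ s in Set.Ico t0 t, M s ∂μ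

/-- The operator `Γ`. -/
def Gam {E : Type*} [NormedAddCommGroup E] [NormedSpace ℝ E] [CompleteSpace E]
    (t0 : ℝ) (φ : ℝ → E) (f : ℝ → (ℝ → E) → E) (ρ : ℝ → (ℝ → E) → ℝ)
    (μ : Measure ℝ) (x : ℝ → E) : ℝ → E := fun t =>
  if t ≤ t0 then φ (t - t0)
  else x t0 + ∫ s in Set.Ico t0 t, f s (history x (ρ s (history x s))) ∂μ

/-- A regulated function has bounded norm on a compact interval. -/
lemma bddAbove_norm_of_regulated {E : Type*} [NormedAddCommGroup E] {f : ℝ → E} {a b : ℝ}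
    (hf : RegulatedOnIcc f a b) : BddAbove ((fun u => ‖f u‖) '' Set.Icc a b) := by
  refine IsCompact.induction_on (isCompact_Icc (a := a) (b := b))
    (p := fun s => BddAbove ((fun u => ‖f u‖) '' s)) (by simp)
    (fun s t hst h => h.mono (Set.image_mono hst))
    (fun s t hs ht => by simp only [Set.image_union]; exact hs.union ht) ?_
  intro t ht
  obtain ⟨BL, hBL⟩ : ∃ B, ∀ᶠ s in nhdsWithin t (Set.Ico a t), ‖f s‖ ≤ B := by
    rcases eq_or_lt_of_le ht.1 with h | h
    · exact ⟨0, by rw [← h, Set.Ico_self, nhdsWithin_empty]; exact Filter.eventually_bot⟩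
    · obtain ⟨l, hl⟩ := hf.1 t ⟨h, ht.2⟩
      exact ⟨‖l‖ + 1, (hl.norm.eventually_lt_const (lt_add_one ‖l‖)).mono
        fun s hs => hs.le⟩
  obtain ⟨BR, hBR⟩ : ∃ B, ∀ᶠ s in nhdsWithin t (Set.Ioc t b), ‖f s‖ ≤ B := by
    rcases eq_or_lt_of_le ht.2 with h | h
    · exact ⟨0, by rw [h, Set.Ioc_self, nhdsWithin_empty]; exact Filter.eventually_bot⟩
    · obtain ⟨l, hl⟩ := hf.2 t ⟨ht.1, h⟩
      exact ⟨‖l‖ + 1, (hl.norm.eventually_lt_const (lt_add_one ‖l‖)).mono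
        fun s hs => hs.le⟩
  set C := max BL (max ‖f t‖ BR) with hCdef
  have hC : ∀ᶠ s in nhdsWithin t (Set.Icc a b), ‖f s‖ ≤ C := by
    have hsub : Set.Icc a b ⊆ Set.Ico a t ∪ ({t} ∪ Set.Ioc t b) := by
      intro s hs
      rcases lt_trichotomy s t with h | h | h
      · exact Or.inl ⟨hs.1, h⟩
      · exact Or.inr (Or.inl h)
      · exact Or.inr (Or.inr ⟨h, hs.2⟩)
    refine Filter.Eventually.filter_mono (nhdsWithin_mono t hsub) ?_
    rw [nhdsWithin_union, nhdsWithin_union, Filter.eventually_sup, Filter.eventually_sup]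
    refine ⟨hBL.mono fun s hs => hs.trans (le_max_left _ _), ?_,
      hBR.mono fun s hs => hs.trans ((le_max_right _ _).trans (le_max_right _ _))⟩
    rw [nhdsWithin_singleton]
    exact Filter.eventually_pure.mpr ((le_max_left _ _).trans (le_max_right _ _))
  exact ⟨{s | ‖f s‖ ≤ C}, hC, ⟨C, by rintro v ⟨s, hs, rfl⟩; exact hs⟩⟩

/-- Difference of regulated functions is regulated. -/
lemma RegulatedOnIcc.sub' {E : Type*} [NormedAddCommGroup E] {f g : ℝ → E} {a b : ℝ}
    (hf : RegulatedOnIcc f a b) (hg : RegulatedOnIcc g a b) :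
    RegulatedOnIcc (f - g) a b := by
  constructor
  · intro t ht
    obtain ⟨lf, hlf⟩ := hf.1 t ht
    obtain ⟨lg, hlg⟩ := hg.1 t ht
    exact ⟨lf - lg, hlf.sub hlg⟩
  · intro t ht
    obtain ⟨lf, hlf⟩ := hf.2 t ht
    obtain ⟨lg, hlg⟩ := hg.2 t ht
    exact ⟨lf - lg, hlf.sub hlg⟩

/-- Convex combination of regulated functions is regulated. -/
lemma RegulatedOnIcc.combo {E : Type*} [NormedAddCommGroup E] [NormedSpace ℝ E]
    {f g : ℝ → E} {a b : ℝ} (c d : ℝ)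
    (hf : RegulatedOnIcc f a b) (hg : RegulatedOnIcc g a b) :
    RegulatedOnIcc (c • f + d • g) a b := by
  constructor
  · intro t ht
    obtain ⟨lf, hlf⟩ := hf.1 t ht
    obtain ⟨lg, hlg⟩ := hg.1 t ht
    exact ⟨c • lf + d • lg, (hlf.const_smul c).add (hlg.const_smul d)⟩
  · intro t ht
    obtain ⟨lf, hlf⟩ := hf.2 t ht
    obtain ⟨lg, hlg⟩ := hg.2 t ht
    exact ⟨c • lf + d • lg, (hlf.const_smul c).add (hlg.const_smul d)⟩

/-- the set `A` is convex, closed and bounded in `X`; every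
`x ∈ A` satisfies `‖x‖_X ≤ ‖φ‖_𝓑 + ∫_{t0}^{t0+σ} M dg + ‖φ 0‖`. -/
theorem A_convex_closed_bounded
    (n : ℕ) (t0 σ : ℝ) (hσ : 0 < σ)
    (P : PhaseSpace (Eu n))
    (φ : ℝ → Eu n) (hφ : P.mem φ)
    (g : ℝ → ℝ)
    (hg_mono : MonotoneOn g (Set.Icc t0 (t0 + σ)))
    (hg_lc : ∀ t ∈ Set.Ioc t0 (t0 + σ),
      Filter.Tendsto g (nhdsWithin t (Set.Ico t0 t)) (nhds (g t)))
    (μ : Measure ℝ)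
    (hμ : ∀ a b : ℝ, t0 ≤ a → a ≤ b → b ≤ t0 + σ →
      μ (Set.Ico a b) = ENNReal.ofReal (g b - g a))
    (M : ℝ → ℝ) (hM0 : ∀ s, 0 ≤ M s)
    (hMint : MeasureTheory.IntegrableOn M (Set.Icc t0 (t0 + σ)) μ) :
    -- `A` is convex
    (∀ x y : ℝ → Eu n, memA P t0 σ φ M μ x → memA P t0 σ φ M μ y →
      ∀ ξ ∈ Set.Icc (0:ℝ) 1, memA P t0 σ φ M μ (ξ • x + (1 - ξ) • y)) ∧
    -- `A` is closed in `X`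
    (∀ u : ℕ → ℝ → Eu n, (∀ k, memA P t0 σ φ M μ (u k)) →
      ∀ x : ℝ → Eu n, memX P t0 σ x →
        Filter.Tendsto (fun k => normX P t0 σ (u k - x)) Filter.atTop (nhds 0) →
        memA P t0 σ φ M μ x) ∧
    -- `A` is bounded
    (∀ x : ℝ → Eu n, memA P t0 σ φ M μ x →
      normX P t0 σ x ≤ P.nrm φ + (∫ s in Set.Ico t0 (t0 + σ), M s ∂μ) + ‖φ 0‖) := by
  have hI0 : (0:ℝ) ≤ ∫ s in Set.Ico t0 (t0 + σ), M s ∂μ :=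
    integral_nonneg fun s => hM0 s
  have hMint' : IntegrableOn M (Set.Ico t0 (t0 + σ)) μ :=
    hMint.mono_set Set.Ico_subset_Icc_self
  have hImono : ∀ t ∈ Set.Icc t0 (t0 + σ),
      (∫ s in Set.Ico t0 t, M s ∂μ) ≤ ∫ s in Set.Ico t0 (t0 + σ), M s ∂μ := by
    intro t ht
    refine setIntegral_mono_set hMint' (Filter.Eventually.of_forall fun s => hM0 s) ?_
    exact HasSubset.Subset.eventuallyLE (Set.Ico_subset_Ico_right ht.2)
  refine ⟨?_, ?_, ?_⟩
  · -- convexity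
    intro x y hx hy ξ hξ
    obtain ⟨⟨hxmem, hxreg⟩, hxhist, hxbd⟩ := hx
    obtain ⟨⟨hymem, hyreg⟩, hyhist, hybd⟩ := hy
    have hξ1 : (0:ℝ) ≤ 1 - ξ := by linarith [hξ.2]
    have hsum : ξ + (1 - ξ) = 1 := by ring
    have hzhist : ∀ θ ≤ (0:ℝ), (ξ • x + (1 - ξ) • y) (t0 + θ) = φ θ := by
      intro θ hθ
      show ξ • x (t0 + θ) + (1 - ξ) • y (t0 + θ) = φ θ
      rw [hxhist θ hθ, hyhist θ hθ, ← add_smul, hsum, one_smul]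
    refine ⟨⟨?_, RegulatedOnIcc.combo ξ (1 - ξ) hxreg hyreg⟩, hzhist, ?_⟩
    · exact P.mem_congr φ _ hφ fun θ hθ => (hzhist θ hθ).symm
    · intro t ht
      have h1 := hxbd t ht
      have h2 := hybd t ht
      have hzval : (ξ • x + (1 - ξ) • y) t - φ 0 =
          ξ • (x t - φ 0) + (1 - ξ) • (y t - φ 0) := by
        show ξ • x t + (1 - ξ) • y t - φ 0 = _
        module
      calc ‖(ξ • x + (1 - ξ) • y) t - φ 0‖
          = ‖ξ • (x t - φ 0) + (1 - ξ) • (y t - φ 0)‖ := by rw [hzval]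
        _ ≤ ξ * ‖x t - φ 0‖ + (1 - ξ) * ‖y t - φ 0‖ := by
            refine (norm_add_le _ _).trans ?_
            rw [norm_smul, norm_smul, Real.norm_of_nonneg hξ.1, Real.norm_of_nonneg hξ1]
        _ ≤ ξ * (∫ s in Set.Ico t0 t, M s ∂μ) + (1 - ξ) * (∫ s in Set.Ico t0 t, M s ∂μ) :=
            add_le_add (mul_le_mul_of_nonneg_left h1 hξ.1) (mul_le_mul_of_nonneg_left h2 hξ1)
        _ = ∫ s in Set.Ico t0 t, M s ∂μ := by ring
  · -- closedness
    intro u hu x hxX hconv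
    obtain ⟨hxmem, hxreg⟩ := hxX
    have hreg_diff : ∀ k, RegulatedOnIcc (u k - x) t0 (t0 + σ) :=
      fun k => (hu k).1.2.sub' hxreg
    have hψmem : P.mem (history (u 0 - x) t0) := by
      have h := P.add_mem _ _ (hu 0).1.1 (P.smul_mem (-1) _ hxmem)
      have heq : (history (u 0) t0 + (-1 : ℝ) • history x t0) = history (u 0 - x) t0 := by
        funext θ
        simp [history, sub_eq_add_neg]
      rwa [heq] at h
    have hnrm_const : ∀ k, P.nrm (history (u k - x) t0) = P.nrm (history (u 0 - x) t0) := by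
      intro k
      refine P.nrm_congr _ _ fun θ hθ => ?_
      show (u k - x) (t0 + θ) = (u 0 - x) (t0 + θ)
      have h1 := (hu k).2.1 θ hθ
      have h2 := (hu 0).2.1 θ hθ
      simp only [Pi.sub_apply, h1, h2]
    have hterm1 : Tendsto (fun k => P.nrm (history (u k - x) t0)) atTop (nhds 0) := by
      refine tendsto_of_tendsto_of_tendsto_of_le_of_le tendsto_const_nhds hconv
        (fun k => P.nrm_nonneg _) (fun k => ?_)
      exact le_add_of_nonneg_right (Real.sSup_nonneg (by rintro v ⟨s, hs, rfl⟩; positivity))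
    have hnrm0 : P.nrm (history (u 0 - x) t0) = 0 := by
      have : Tendsto (fun _ : ℕ => P.nrm (history (u 0 - x) t0)) atTop (nhds 0) := by
        refine hterm1.congr fun k => hnrm_const k
      exact tendsto_nhds_unique this tendsto_const_nhds ▸ rfl
    have hhist : ∀ θ ≤ (0:ℝ), x (t0 + θ) = φ θ := by
      intro θ hθ
      have h0 : (u 0 - x) (t0 + θ) = 0 := P.nrm_eq_zero _ hψmem hnrm0 θ hθ
      have h1 : u 0 (t0 + θ) - x (t0 + θ) = 0 := h0
      have h2 := (hu 0).2.1 θ hθ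
      rw [sub_eq_zero] at h1
      rw [← h1, h2]
    refine ⟨⟨hxmem, hxreg⟩, hhist, ?_⟩
    intro t ht
    have key : ∀ k, ‖x t - φ 0‖ ≤ normX P t0 σ (u k - x) + ∫ s in Set.Ico t0 t, M s ∂μ := by
      intro k
      have h1 : ‖x t - φ 0‖ ≤ ‖x t - u k t‖ + ‖u k t - φ 0‖ :=
        norm_sub_le_norm_sub_add_norm_sub _ _ _
      have h1' : ‖x t - u k t‖ = ‖(u k - x) t‖ := by
        rw [Pi.sub_apply, norm_sub_rev]
      have h2 : ‖(u k - x) t‖ ≤ normX P t0 σ (u k - x) := by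
        have hb := bddAbove_norm_of_regulated (hreg_diff k)
        have hmem : ‖(u k - x) t‖ ∈ (fun s => ‖(u k - x) s‖) '' Set.Icc t0 (t0 + σ) :=
          ⟨t, ht, rfl⟩
        have hle := le_csSup hb hmem
        have := P.nrm_nonneg (history (u k - x) t0)
        unfold normX
        linarith
      have h3 := (hu k).2.2 t ht
      linarith
    have hlim : Tendsto (fun k => normX P t0 σ (u k - x) + ∫ s in Set.Ico t0 t, M s ∂μ)
        atTop (nhds (0 + ∫ s in Set.Ico t0 t, M s ∂μ)) := hconv.add_const _
    have := ge_of_tendsto hlim (Filter.Eventually.of_forall fun k => key k)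
    linarith
  · -- boundedness
    intro x hx
    obtain ⟨⟨hxmem, hxreg⟩, hxhist, hxbd⟩ := hx
    have h1 : P.nrm (history x t0) = P.nrm φ :=
      P.nrm_congr _ _ fun θ hθ => hxhist θ hθ
    have h2 : sSup ((fun u => ‖x u‖) '' Set.Icc t0 (t0 + σ)) ≤
        (∫ s in Set.Ico t0 (t0 + σ), M s ∂μ) + ‖φ 0‖ := by
      refine Real.sSup_le ?_ (by positivity)
      rintro v ⟨s, hs, rfl⟩
      have hb := hxbd s hs
      have hm := hImono s hs
      have hn : ‖x s‖ - ‖φ 0‖ ≤ ‖x s - φ 0‖ := norm_sub_norm_le _ _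
      linarith
    unfold normX
    linarith
end
end

section
/- Let ε ∈ (0, ε0], let y : (−∞, L/ε] → ℝ^n satisfy y_0 ∈ 𝓑 and y regulated on [0, L/ε], let t ∈ [0, L/ε], and let p be the largest integer with pT ≤ t. Then ∑_{i=1}^{p} ‖∫_{(i−1)T}^{iT} (f(s, y_{ρ(s, y_s, ε)}) − f(s, y_{ρ(s, y_{(i−1)T}, ε)})) dh(s)‖ ≤ C2·C3·α·L. -/
open MeasureTheory Filter Set

noncomputable section

/-- estimate (4.6) in the proof of the periodic averaging
theorem. -/
theorem averaging_estimate_one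
    (n : ℕ) (ε0 L T α M : ℝ)
    (hε0 : 0 < ε0) (hL : 0 < L) (hT : 0 < T) (hα : 0 < α) (hM : 0 < M)
    -- the Banach space `𝓑` of regulated functions on `(-∞, 0]`
    (Bmem : (ℝ → Eu n) → Prop)
    (hBreg : ∀ φ : ℝ → Eu n, Bmem φ → RegulatedOnIic0 φ)
    -- the left-continuous nondecreasing function `h` with `h(t+T) - h(t) = α`
    (h : ℝ → ℝ) (hmono : MonotoneOn h (Set.Ici 0))
    (hlc : ∀ t > (0:ℝ), Filter.Tendsto h (nhdsWithin t (Set.Ico 0 t)) (nhds (h t)))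
    (hper : ∀ t, 0 ≤ t → h (t + T) - h t = α)
    (μ : Measure ℝ)
    (hμ : ∀ a b : ℝ, 0 ≤ a → a ≤ b → μ (Set.Ico a b) = ENNReal.ofReal (h b - h a))
    -- `f` bounded by `M`
    (f : ℝ → (ℝ → Eu n) → Eu n)
    (hfb : ∀ t, 0 ≤ t → ∀ x : ℝ → Eu n, Bmem x → ‖f t x‖ ≤ M)
    -- the delay functional `ρ`
    (ρ : ℝ → (ℝ → Eu n) → ℝ → ℝ)
    (hρnn : ∀ t, 0 ≤ t → ∀ (x : ℝ → Eu n) (e : ℝ), 0 ≤ ρ t x e)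
    -- (C7)
    (hC7 : ∀ e ∈ Set.Ioc (0:ℝ) ε0, ∀ t, 0 ≤ t → ∀ x : ℝ → Eu n, Bmem x →
      ρ t x e ≤ t)
    -- (C6')
    (C2 : ℝ) (hC2 : 0 < C2)
    (hC6 : ∀ b' : ℝ, 0 < b' → ∀ x : ℝ → Eu n, Bmem (history x 0) →
      RegulatedOnIcc x 0 b' → ∀ s, 0 ≤ s →
      ∀ a ∈ Set.Icc (0:ℝ) b', ∀ b ∈ Set.Icc (0:ℝ) b',
      ‖f s (history x a) - f s (history x b)‖ ≤ C2 * |a - b|)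
    -- (C8)
    (C3 : ℝ) (hC3 : 0 < C3)
    (hC8 : ∀ e ∈ Set.Ioc (0:ℝ) ε0, ∀ b' : ℝ, 0 < b' → ∀ x : ℝ → Eu n,
      Bmem (history x 0) → RegulatedOnIcc x 0 b' →
      ∀ t, 0 ≤ t → ∀ a ∈ Set.Icc (0:ℝ) b', ∀ b ∈ Set.Icc (0:ℝ) b',
      |ρ t (history x a) e - ρ t (history x b) e| ≤ e * C3 * |a - b|)
    -- the fixed `ε` and the function `y`
    (ε : ℝ) (hε : ε ∈ Set.Ioc (0:ℝ) ε0)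
    (y : ℝ → Eu n) (hy0 : Bmem (history y 0))
    (hyreg : RegulatedOnIcc y 0 (L / ε))
    (hyhist : ∀ u ∈ Set.Icc (0:ℝ) (L / ε), Bmem (history y u))
    -- integrability of the integrands
    (hint1 : MeasureTheory.IntegrableOn
      (fun s => f s (history y (ρ s (history y s) ε))) (Set.Icc 0 (L / ε)) μ)
    (hint2 : ∀ c ∈ Set.Icc (0:ℝ) (L / ε), MeasureTheory.IntegrableOn
      (fun s => f s (history y (ρ s (history y c) ε))) (Set.Icc 0 (L / ε)) μ)
    -- `t` and the largest integer `p` with `pT ≤ t`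
    (t : ℝ) (ht : t ∈ Set.Icc (0:ℝ) (L / ε))
    (p : ℕ) (hp1 : (p : ℝ) * T ≤ t) (hp2 : t < ((p : ℝ) + 1) * T) :
    ∑ i ∈ Finset.range p,
      ‖∫ s in Set.Ico ((i : ℝ) * T) (((i : ℝ) + 1) * T),
        (f s (history y (ρ s (history y s) ε)) -
          f s (history y (ρ s (history y ((i : ℝ) * T)) ε))) ∂μ‖ ≤
      C2 * C3 * α * L := by
  obtain ⟨hε1, hε2⟩ := hε
  have hLεpos : 0 < L / ε := div_pos hL hε1
  have hLε : (p : ℝ) * T ≤ L / ε := le_trans hp1 ht.2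
  have key : ∀ i ∈ Finset.range p,
      ‖∫ s in Set.Ico ((i : ℝ) * T) (((i : ℝ) + 1) * T),
        (f s (history y (ρ s (history y s) ε)) -
          f s (history y (ρ s (history y ((i : ℝ) * T)) ε))) ∂μ‖ ≤
      C2 * (ε * C3 * T) * α := by
    intro i hi
    have hi' : ((i : ℝ) + 1) ≤ (p : ℝ) := by exact_mod_cast Finset.mem_range.mp hi
    have h0i : (0 : ℝ) ≤ (i : ℝ) * T := by positivity
    have hiT : ((i : ℝ) + 1) * T ≤ L / ε :=
      le_trans (by nlinarith) hLε
    have hle : (i : ℝ) * T ≤ ((i : ℝ) + 1) * T := by nlinarith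
    have hμIco : μ (Set.Ico ((i : ℝ) * T) (((i : ℝ) + 1) * T)) = ENNReal.ofReal α := by
      rw [hμ _ _ h0i hle]
      congr 1
      have := hper ((i : ℝ) * T) h0i
      have e : ((i : ℝ) + 1) * T = (i : ℝ) * T + T := by ring
      rw [e]; linarith
    have hfin : μ (Set.Ico ((i : ℝ) * T) (((i : ℝ) + 1) * T)) < ⊤ := by
      rw [hμIco]; exact ENNReal.ofReal_lt_top
    have hbound : ∀ s ∈ Set.Ico ((i : ℝ) * T) (((i : ℝ) + 1) * T),
        ‖f s (history y (ρ s (history y s) ε)) -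
          f s (history y (ρ s (history y ((i : ℝ) * T)) ε))‖ ≤ C2 * (ε * C3 * T) := by
      intro s hs
      have hs0 : 0 ≤ s := le_trans h0i hs.1
      have hsL : s ≤ L / ε := le_trans hs.2.le hiT
      have hiTL : (i : ℝ) * T ≤ L / ε := le_trans hle hiT
      have hmemS : Bmem (history y s) := hyhist s ⟨hs0, hsL⟩
      have hmemI : Bmem (history y ((i : ℝ) * T)) := hyhist _ ⟨h0i, hiTL⟩
      set a := ρ s (history y s) ε with ha_def
      set b := ρ s (history y ((i : ℝ) * T)) ε with hb_def
      have ha : a ∈ Set.Icc (0 : ℝ) (L / ε) :=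
        ⟨hρnn s hs0 _ ε, le_trans (hC7 ε ⟨hε1, hε2⟩ s hs0 _ hmemS) hsL⟩
      have hb : b ∈ Set.Icc (0 : ℝ) (L / ε) :=
        ⟨hρnn s hs0 _ ε, le_trans (hC7 ε ⟨hε1, hε2⟩ s hs0 _ hmemI) hsL⟩
      have h1 : ‖f s (history y a) - f s (history y b)‖ ≤ C2 * |a - b| :=
        hC6 (L / ε) hLεpos y hy0 hyreg s hs0 a ha b hb
      have h2 : |a - b| ≤ ε * C3 * |s - (i : ℝ) * T| :=
        hC8 ε ⟨hε1, hε2⟩ (L / ε) hLεpos y hy0 hyreg s hs0 s ⟨hs0, hsL⟩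
          ((i : ℝ) * T) ⟨h0i, hiTL⟩
      have h3 : |s - (i : ℝ) * T| ≤ T := by
        rw [abs_of_nonneg (by linarith [hs.1])]
        nlinarith [hs.2]
      calc ‖f s (history y a) - f s (history y b)‖ ≤ C2 * |a - b| := h1
        _ ≤ C2 * (ε * C3 * T) := by
            apply mul_le_mul_of_nonneg_left _ hC2.le
            calc |a - b| ≤ ε * C3 * |s - (i : ℝ) * T| := h2
              _ ≤ ε * C3 * T := by
                  apply mul_le_mul_of_nonneg_left h3 (by positivity)
    have := norm_setIntegral_le_of_norm_le_const hfin hbound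
    calc ‖∫ s in Set.Ico ((i : ℝ) * T) (((i : ℝ) + 1) * T),
        (f s (history y (ρ s (history y s) ε)) -
          f s (history y (ρ s (history y ((i : ℝ) * T)) ε))) ∂μ‖
        ≤ C2 * (ε * C3 * T) * (μ (Set.Ico ((i : ℝ) * T) (((i : ℝ) + 1) * T))).toReal := this
      _ = C2 * (ε * C3 * T) * α := by
          rw [hμIco, ENNReal.toReal_ofReal hα.le]
  have hsum : ∑ i ∈ Finset.range p,
      ‖∫ s in Set.Ico ((i : ℝ) * T) (((i : ℝ) + 1) * T),
        (f s (history y (ρ s (history y s) ε)) -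
          f s (history y (ρ s (history y ((i : ℝ) * T)) ε))) ∂μ‖ ≤
      (p : ℝ) * (C2 * (ε * C3 * T) * α) := by
    calc _ ≤ ∑ _i ∈ Finset.range p, C2 * (ε * C3 * T) * α := Finset.sum_le_sum key
      _ = (p : ℝ) * (C2 * (ε * C3 * T) * α) := by
          rw [Finset.sum_const, Finset.card_range, nsmul_eq_mul]
  have hpTε : (p : ℝ) * T * ε ≤ L := (le_div_iff₀ hε1).mp hLε
  have hfin2 : (p : ℝ) * (C2 * (ε * C3 * T) * α) ≤ C2 * C3 * α * L := by
    nlinarith [mul_le_mul_of_nonneg_left hpTε (by positivity : (0:ℝ) ≤ C2 * C3 * α),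
      hp1, hα, hC2, hC3]
  linarith
end
end

section
/- Let ε ∈ (0, ε0], let y : (−∞, L/ε] → ℝ^n satisfy y_0 ∈ 𝓑 and y regulated on [0, L/ε], let t ∈ [0, L/ε], and let p be the largest integer with pT ≤ t. Then, with f0(x) := (1/T)∫_{0}^{T} f(s, x) dh(s), one has ∑_{i=1}^{p} ‖∫_{(i−1)T}^{iT} (f0(y_{ρ(s, y_s, ε)}) − f0(y_{ρ(s, y_{(i−1)T}, ε)})) ds‖ ≤ C2·C3·α·L, where the outer integrals are Lebesgue integrals with respect to s. -/
open MeasureTheory Filter Set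

noncomputable section

/-- the estimate (4.7) in the proof of the periodic averaging
theorem, for the averaged function `f0`. -/
theorem averaging_estimate_two
    (n : ℕ) (ε0 L T α M : ℝ)
    (hε0 : 0 < ε0) (hL : 0 < L) (hT : 0 < T) (hα : 0 < α) (hM : 0 < M)
    -- the Banach space `𝓑` of regulated functions on `(-∞, 0]`
    (Bmem : (ℝ → Eu n) → Prop)
    (hBreg : ∀ φ : ℝ → Eu n, Bmem φ → RegulatedOnIic0 φ)
    -- the left-continuous nondecreasing function `h` with `h(t+T) - h(t) = α`
    (h : ℝ → ℝ) (hmono : MonotoneOn h (Set.Ici 0))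
    (hlc : ∀ t > (0:ℝ), Filter.Tendsto h (nhdsWithin t (Set.Ico 0 t)) (nhds (h t)))
    (hper : ∀ t, 0 ≤ t → h (t + T) - h t = α)
    (μ : Measure ℝ)
    (hμ : ∀ a b : ℝ, 0 ≤ a → a ≤ b → μ (Set.Ico a b) = ENNReal.ofReal (h b - h a))
    -- `f` bounded by `M`
    (f : ℝ → (ℝ → Eu n) → Eu n)
    (hfb : ∀ t, 0 ≤ t → ∀ x : ℝ → Eu n, Bmem x → ‖f t x‖ ≤ M)
    -- the delay functional `ρ`
    (ρ : ℝ → (ℝ → Eu n) → ℝ → ℝ)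
    (hρnn : ∀ t, 0 ≤ t → ∀ (x : ℝ → Eu n) (e : ℝ), 0 ≤ ρ t x e)
    -- (C7)
    (hC7 : ∀ e ∈ Set.Ioc (0:ℝ) ε0, ∀ t, 0 ≤ t → ∀ x : ℝ → Eu n, Bmem x →
      ρ t x e ≤ t)
    -- (C6')
    (C2 : ℝ) (hC2 : 0 < C2)
    (hC6 : ∀ b' : ℝ, 0 < b' → ∀ x : ℝ → Eu n, Bmem (history x 0) →
      RegulatedOnIcc x 0 b' → ∀ s, 0 ≤ s →
      ∀ a ∈ Set.Icc (0:ℝ) b', ∀ b ∈ Set.Icc (0:ℝ) b',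
      ‖f s (history x a) - f s (history x b)‖ ≤ C2 * |a - b|)
    -- (C8)
    (C3 : ℝ) (hC3 : 0 < C3)
    (hC8 : ∀ e ∈ Set.Ioc (0:ℝ) ε0, ∀ b' : ℝ, 0 < b' → ∀ x : ℝ → Eu n,
      Bmem (history x 0) → RegulatedOnIcc x 0 b' →
      ∀ t, 0 ≤ t → ∀ a ∈ Set.Icc (0:ℝ) b', ∀ b ∈ Set.Icc (0:ℝ) b',
      |ρ t (history x a) e - ρ t (history x b) e| ≤ e * C3 * |a - b|)
    -- the fixed `ε` and the function `y`
    (ε : ℝ) (hε : ε ∈ Set.Ioc (0:ℝ) ε0)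
    (y : ℝ → Eu n) (hy0 : Bmem (history y 0))
    (hyreg : RegulatedOnIcc y 0 (L / ε))
    (hyhist : ∀ u ∈ Set.Icc (0:ℝ) (L / ε), Bmem (history y u))
    -- the averaged function `f0`
    (hfint : ∀ x : ℝ → Eu n, Bmem x →
      MeasureTheory.IntegrableOn (fun s => f s x) (Set.Ico 0 T) μ)
    (f0 : (ℝ → Eu n) → Eu n)
    (hf0 : ∀ x : ℝ → Eu n, f0 x = (1 / T) • ∫ s in Set.Ico (0:ℝ) T, f s x ∂μ)
    -- integrability (w.r.t. Lebesgue measure) of the integrands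
    (hint1 : MeasureTheory.IntegrableOn
      (fun s => f0 (history y (ρ s (history y s) ε))) (Set.Icc 0 (L / ε)))
    (hint2 : ∀ c ∈ Set.Icc (0:ℝ) (L / ε), MeasureTheory.IntegrableOn
      (fun s => f0 (history y (ρ s (history y c) ε))) (Set.Icc 0 (L / ε)))
    -- `t` and the largest integer `p` with `pT ≤ t`
    (t : ℝ) (ht : t ∈ Set.Icc (0:ℝ) (L / ε))
    (p : ℕ) (hp1 : (p : ℝ) * T ≤ t) (hp2 : t < ((p : ℝ) + 1) * T) :
    ∑ i ∈ Finset.range p,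
      ‖∫ s in Set.Ico ((i : ℝ) * T) (((i : ℝ) + 1) * T),
        (f0 (history y (ρ s (history y s) ε)) -
          f0 (history y (ρ s (history y ((i : ℝ) * T)) ε)))‖ ≤
      C2 * C3 * α * L := by
  have hLε : 0 < L / ε := div_pos hL hε.1
  -- measure of the period interval
  have hμT : μ (Set.Ico (0:ℝ) T) = ENNReal.ofReal α := by
    rw [hμ 0 T le_rfl hT.le]
    congr 1
    simpa using hper 0 le_rfl
  have hμTfin : μ (Set.Ico (0:ℝ) T) < ⊤ := by rw [hμT]; exact ENNReal.ofReal_lt_top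
  -- key Lipschitz estimate for f0
  have key : ∀ a ∈ Set.Icc (0:ℝ) (L/ε), ∀ b ∈ Set.Icc (0:ℝ) (L/ε),
      ‖f0 (history y a) - f0 (history y b)‖ ≤ C2 * α / T * |a - b| := by
    intro a ha b hb
    rw [hf0, hf0, ← smul_sub,
      ← integral_sub (hfint _ (hyhist a ha)) (hfint _ (hyhist b hb))]
    rw [norm_smul]
    have hbound : ‖∫ s in Set.Ico (0:ℝ) T,
        (f s (history y a) - f s (history y b)) ∂μ‖ ≤ (C2 * |a - b|) * α := by
      have := norm_setIntegral_le_of_norm_le_const (μ := μ)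
        (f := fun s => f s (history y a) - f s (history y b))
        (C := C2 * |a - b|) hμTfin
        (fun s hs => hC6 (L/ε) hLε y hy0 hyreg s hs.1 a ha b hb)
      calc ‖∫ s in Set.Ico (0:ℝ) T, (f s (history y a) - f s (history y b)) ∂μ‖
          ≤ C2 * |a - b| * (μ (Set.Ico (0:ℝ) T)).toReal := this
        _ = C2 * |a - b| * α := by rw [hμT, ENNReal.toReal_ofReal hα.le]
    have h1T : ‖(1/T : ℝ)‖ = 1/T := by
      rw [Real.norm_eq_abs, abs_of_pos (by positivity)]
    rw [h1T]
    calc (1/T) * ‖∫ s in Set.Ico (0:ℝ) T,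
          (f s (history y a) - f s (history y b)) ∂μ‖
        ≤ (1/T) * ((C2 * |a - b|) * α) := by
          apply mul_le_mul_of_nonneg_left hbound (by positivity)
      _ = C2 * α / T * |a - b| := by field_simp
  have hεt : ε * t ≤ L := by
    rw [← le_div_iff₀' hε.1]; exact ht.2
  -- per-interval estimate
  have per_interval : ∀ i ∈ Finset.range p,
      ‖∫ s in Set.Ico ((i : ℝ) * T) (((i : ℝ) + 1) * T),
        (f0 (history y (ρ s (history y s) ε)) -
          f0 (history y (ρ s (history y ((i : ℝ) * T)) ε)))‖ ≤
      C2 * C3 * α * ε * T := by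
    intro i hi
    have hip : (i:ℝ) + 1 ≤ p := by
      have := Finset.mem_range.1 hi
      exact_mod_cast this
    have hsub : ((i:ℝ) + 1) * T ≤ L / ε := by
      calc ((i:ℝ) + 1) * T ≤ (p:ℝ) * T :=
            mul_le_mul_of_nonneg_right hip hT.le
        _ ≤ t := hp1
        _ ≤ L / ε := ht.2
    have hi0 : (0:ℝ) ≤ (i:ℝ) * T := by positivity
    have hiTmem : (i:ℝ) * T ∈ Set.Icc (0:ℝ) (L/ε) := by
      constructor
      · exact hi0
      · calc (i:ℝ) * T ≤ ((i:ℝ)+1) * T := by nlinarith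
          _ ≤ L / ε := hsub
    have hvol : volume (Set.Ico ((i:ℝ) * T) (((i:ℝ)+1) * T)) = ENNReal.ofReal T := by
      rw [Real.volume_Ico]; congr 1; ring
    have hvolfin : volume (Set.Ico ((i:ℝ) * T) (((i:ℝ)+1) * T)) < ⊤ := by
      rw [hvol]; exact ENNReal.ofReal_lt_top
    have hptwise : ∀ s ∈ Set.Ico ((i:ℝ) * T) (((i:ℝ)+1) * T),
        ‖f0 (history y (ρ s (history y s) ε)) -
          f0 (history y (ρ s (history y ((i : ℝ) * T)) ε))‖ ≤ C2 * C3 * α * ε := by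
      intro s hs
      have hs0 : (0:ℝ) ≤ s := le_trans hi0 hs.1
      have hsLε : s ≤ L / ε := le_trans hs.2.le hsub
      have hsmem : s ∈ Set.Icc (0:ℝ) (L/ε) := ⟨hs0, hsLε⟩
      have hamem : ρ s (history y s) ε ∈ Set.Icc (0:ℝ) (L/ε) :=
        ⟨hρnn s hs0 _ _, le_trans (hC7 ε hε s hs0 _ (hyhist s hsmem)) hsLε⟩
      have hbmem : ρ s (history y ((i:ℝ)*T)) ε ∈ Set.Icc (0:ℝ) (L/ε) :=
        ⟨hρnn s hs0 _ _, le_trans (hC7 ε hε s hs0 _ (hyhist _ hiTmem)) hsLε⟩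
      have hρdiff : |ρ s (history y s) ε - ρ s (history y ((i:ℝ)*T)) ε| ≤
          ε * C3 * |s - (i:ℝ)*T| :=
        hC8 ε hε (L/ε) hLε y hy0 hyreg s hs0 s hsmem ((i:ℝ)*T) hiTmem
      have habs : |s - (i:ℝ)*T| ≤ T := by
        rw [abs_of_nonneg (by linarith [hs.1])]
        nlinarith [hs.2]
      calc ‖f0 (history y (ρ s (history y s) ε)) -
            f0 (history y (ρ s (history y ((i : ℝ) * T)) ε))‖
          ≤ C2 * α / T * |ρ s (history y s) ε - ρ s (history y ((i:ℝ)*T)) ε| :=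
            key _ hamem _ hbmem
        _ ≤ C2 * α / T * (ε * C3 * T) := by
            apply mul_le_mul_of_nonneg_left _ (by positivity)
            calc |ρ s (history y s) ε - ρ s (history y ((i:ℝ)*T)) ε|
                ≤ ε * C3 * |s - (i:ℝ)*T| := hρdiff
              _ ≤ ε * C3 * T := by
                  apply mul_le_mul_of_nonneg_left habs (mul_nonneg hε.1.le hC3.le)
        _ = C2 * C3 * α * ε := by field_simp
    calc ‖∫ s in Set.Ico ((i : ℝ) * T) (((i : ℝ) + 1) * T),
          (f0 (history y (ρ s (history y s) ε)) -
            f0 (history y (ρ s (history y ((i : ℝ) * T)) ε)))‖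
        ≤ (C2 * C3 * α * ε) *
            (volume (Set.Ico ((i:ℝ) * T) (((i:ℝ)+1) * T))).toReal :=
          norm_setIntegral_le_of_norm_le_const hvolfin hptwise
      _ = C2 * C3 * α * ε * T := by rw [hvol, ENNReal.toReal_ofReal hT.le]
  calc ∑ i ∈ Finset.range p,
        ‖∫ s in Set.Ico ((i : ℝ) * T) (((i : ℝ) + 1) * T),
          (f0 (history y (ρ s (history y s) ε)) -
            f0 (history y (ρ s (history y ((i : ℝ) * T)) ε)))‖
      ≤ ∑ _i ∈ Finset.range p, C2 * C3 * α * ε * T :=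
        Finset.sum_le_sum per_interval
    _ = (p:ℝ) * (C2 * C3 * α * ε * T) := by
        rw [Finset.sum_const, Finset.card_range]; push_cast; ring
    _ = C2 * C3 * α * (((p:ℝ) * T) * ε) := by ring
    _ ≤ C2 * C3 * α * (t * ε) := by
        have h0 : (0:ℝ) ≤ C2 * C3 * α := by positivity
        exact mul_le_mul_of_nonneg_left
          (mul_le_mul_of_nonneg_right hp1 hε.1.le) h0
    _ ≤ C2 * C3 * α * L := by
        have h0 : (0:ℝ) ≤ C2 * C3 * α := by positivity
        exact mul_le_mul_of_nonneg_left (by rw [mul_comm]; exact hεt) h0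
end
end

section
/- For all s ≥ 0 and all x, y ∈ BG_q, the state-dependent delay functional ρ(t, x) = t − ∫_{−∞}^{−t} |T(θ)| tanh(|x(θ − t)|) dθ satisfies |ρ(s, y) − ρ(s, x)| ≤ (sup_{θ ≤ 0} |T(θ)|) · (∫_{−∞}^{0} e^{u} du) · ‖y − x‖_{BG_q} = (sup_{θ ≤ 0} |T(θ)|) · ‖y − x‖_{BG_q}. -/
open MeasureTheory Filter Set

noncomputable section

/-- Membership in the phase space `BG_q` with `q θ = e^θ`: regulated on
`(-∞,0]` with `|φ θ|/q θ` bounded. -/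
def BGqMem (φ : ℝ → ℝ) : Prop :=
  RegulatedOnIic0 φ ∧ BddAbove ((fun θ => |φ θ| * Real.exp (-θ)) '' Set.Iic 0)

/-- The norm `‖φ‖_{BG_q} = sup_{θ ≤ 0} |φ θ| e^{-θ}`. -/
def BGqNorm (φ : ℝ → ℝ) : ℝ :=
  sSup ((fun θ => |φ θ| * Real.exp (-θ)) '' Set.Iic 0)

/-- The state-dependent delay functional
`ρ(t,x) = t - ∫_{-∞}^{-t} |T θ| tanh |x (θ - t)| dθ`. -/
def rhoT (Tf : ℝ → ℝ) (t : ℝ) (x : ℝ → ℝ) : ℝ :=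
  t - ∫ θ in Set.Iic (-t), |Tf θ| * Real.tanh |x (θ - t)|

/-- The functional `f(t,x) = cos² t ∫_{-∞}^{0} T θ tanh (x θ) dθ`. -/
def fT (Tf : ℝ → ℝ) (t : ℝ) (x : ℝ → ℝ) : ℝ :=
  Real.cos t ^ 2 * ∫ θ in Set.Iic (0:ℝ), Tf θ * Real.tanh (x θ)

/-! ### Auxiliary lemmas -/

open scoped Topology

lemma tanh_hasDerivAt' (x : ℝ) : HasDerivAt Real.tanh (1 / Real.cosh x ^ 2) x := by
  have hfun : Real.tanh = fun y => Real.sinh y / Real.cosh y :=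
    funext fun y => Real.tanh_eq_sinh_div_cosh y
  have h := (Real.hasDerivAt_sinh x).div (Real.hasDerivAt_cosh x) (ne_of_gt (Real.cosh_pos x))
  have e : (Real.cosh x * Real.cosh x - Real.sinh x * Real.sinh x) / Real.cosh x ^ 2
      = 1 / Real.cosh x ^ 2 := by
    rw [show Real.cosh x * Real.cosh x - Real.sinh x * Real.sinh x
        = Real.cosh x ^ 2 - Real.sinh x ^ 2 by ring, Real.cosh_sq_sub_sinh_sq]
  rw [hfun]
  exact e ▸ h

lemma tanh_differentiable' : Differentiable ℝ Real.tanh :=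
  fun x => (tanh_hasDerivAt' x).differentiableAt

lemma tanh_lipschitz' (a b : ℝ) : |Real.tanh a - Real.tanh b| ≤ |a - b| := by
  have hlip : LipschitzWith 1 Real.tanh := by
    apply lipschitzWith_of_nnnorm_deriv_le tanh_differentiable'
    intro x
    rw [← NNReal.coe_le_coe, coe_nnnorm, NNReal.coe_one, (tanh_hasDerivAt' x).deriv,
      Real.norm_eq_abs, abs_of_nonneg (by positivity), div_le_one (by positivity)]
    nlinarith [Real.one_le_cosh x]
  have := hlip.dist_le_mul a b
  simpa [Real.dist_eq] using this

lemma tanh_abs_le' (r : ℝ) : |Real.tanh r| ≤ |r| := by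
  simpa using tanh_lipschitz' r 0

/-- A set of reals all of whose points are "isolated" (each point of `ℝ` has a
punctured neighborhood missing the set) is countable. -/
lemma countable_of_isolated' {S : Set ℝ}
    (h : ∀ t : ℝ, ∃ ε > 0, S ∩ Set.Ioo (t - ε) (t + ε) ⊆ {t}) : S.Countable := by
  choose ε εpos hε using h
  have hq : ∀ t : S, ∃ p : ℚ × ℚ,
      ((t:ℝ) - ε t < p.1 ∧ (p.1:ℝ) < t) ∧ ((t:ℝ) < p.2 ∧ (p.2:ℝ) < t + ε t) := by
    intro t
    obtain ⟨q1, hq1, hq1'⟩ := exists_rat_btwn (show (t:ℝ) - ε t < t by linarith [εpos (t:ℝ)])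
    obtain ⟨q2, hq2, hq2'⟩ := exists_rat_btwn (show (t:ℝ) < t + ε t by linarith [εpos (t:ℝ)])
    exact ⟨(q1, q2), ⟨hq1, hq1'⟩, ⟨hq2, hq2'⟩⟩
  choose f hf1 hf2 using hq
  have hinj : Function.Injective f := by
    intro t t' hff
    have h1 : (t':ℝ) ∈ S ∩ Set.Ioo ((t:ℝ) - ε t) ((t:ℝ) + ε t) := by
      refine ⟨t'.2, ?_, ?_⟩
      · calc (t:ℝ) - ε t < ((f t).1 : ℝ) := (hf1 t).1
          _ = ((f t').1 : ℝ) := by rw [hff]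
          _ < t' := (hf1 t').2
      · calc (t':ℝ) < ((f t').2 : ℝ) := (hf2 t').1
          _ = ((f t).2 : ℝ) := by rw [hff]
          _ < (t:ℝ) + ε t := (hf2 t).2
    exact (Subtype.ext (hε (t:ℝ) h1)).symm
  exact Set.countable_coe_iff.mp hinj.countable

/-- A regulated function on `(-∞,0]` is continuous off a countable set. -/
lemma regulated_countable_discont {φ : ℝ → ℝ} (hφ : RegulatedOnIic0 φ) :
    ∃ D : Set ℝ, D.Countable ∧ ContinuousOn φ (Set.Iic 0 \ D) := by
  obtain ⟨hlφ, hrφ⟩ := hφ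
  have h1 : ∀ t : ℝ, ∃ l, t ≤ 0 → Tendsto φ (𝓝[<] t) (𝓝 l) := by
    intro t
    by_cases ht : t ≤ 0
    · obtain ⟨l, hl'⟩ := hlφ t ht; exact ⟨l, fun _ => hl'⟩
    · exact ⟨0, fun h => absurd h ht⟩
  choose L hL using h1
  have h2 : ∀ t : ℝ, ∃ l, t < 0 → Tendsto φ (𝓝[Set.Ioo t 0] t) (𝓝 l) := by
    intro t
    by_cases ht : t < 0
    · obtain ⟨l, hr'⟩ := hrφ t ht; exact ⟨l, fun _ => hr'⟩
    · exact ⟨0, fun h => absurd h ht⟩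
  choose R hR using h2
  have hR' : ∀ t < (0:ℝ), Tendsto φ (𝓝[>] t) (𝓝 (R t)) := fun t ht => by
    rw [← nhdsWithin_Ioo_eq_nhdsGT ht]; exact hR t ht
  set S : ℝ → Set ℝ := fun ε => {t | t < 0 ∧ (ε ≤ |φ t - L t| ∨ ε ≤ |φ t - R t|)} with hSdef
  have hScount : ∀ ε : ℝ, 0 < ε → (S ε).Countable := by
    intro ε hεpos
    apply countable_of_isolated'
    have key : ∀ a b c : ℝ, b ≤ 0 → (∀ u ∈ Set.Ioo a b, |φ u - c| ≤ ε/3) →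
        ∀ s ∈ Set.Ioo a b, s ∉ S ε := by
      intro a b c hb0 hball s hs hsS
      have hs0 : s < 0 := lt_of_lt_of_le hs.2 hb0
      have hLs : |L s - c| ≤ ε/3 := by
        have htd : Tendsto (fun u => |φ u - c|) (𝓝[<] s) (𝓝 |L s - c|) :=
          ((hL s hs0.le).sub tendsto_const_nhds).abs
        refine le_of_tendsto htd ?_
        filter_upwards [Ioo_mem_nhdsLT hs.1] with u hu
        exact hball u ⟨hu.1, hu.2.trans hs.2⟩
      have hRs : |R s - c| ≤ ε/3 := by
        have htd : Tendsto (fun u => |φ u - c|) (𝓝[>] s) (𝓝 |R s - c|) :=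
          ((hR' s hs0).sub tendsto_const_nhds).abs
        refine le_of_tendsto htd ?_
        filter_upwards [Ioo_mem_nhdsGT hs.2] with u hu
        exact hball u ⟨hs.1.trans hu.1, hu.2⟩
      have hφs : |φ s - c| ≤ ε/3 := hball s hs
      have e1 : |φ s - L s| ≤ ε/3 + ε/3 := by
        have := abs_sub_le (φ s) c (L s)
        rw [abs_sub_comm c (L s)] at this
        linarith
      have e2 : |φ s - R s| ≤ ε/3 + ε/3 := by
        have := abs_sub_le (φ s) c (R s)
        rw [abs_sub_comm c (R s)] at this
        linarith
      rcases hsS.2 with h | h <;> linarith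
    intro t
    rcases lt_trichotomy t 0 with ht | ht | ht
    · -- t < 0 : both one-sided limits exist at t
      obtain ⟨δ₁, hδ₁pos, hδ₁⟩ := (Metric.tendsto_nhdsWithin_nhds.mp (hL t ht.le)) (ε/3)
        (by linarith)
      obtain ⟨δ₂, hδ₂pos, hδ₂⟩ := (Metric.tendsto_nhdsWithin_nhds.mp (hR' t ht)) (ε/3)
        (by linarith)
      refine ⟨min δ₁ (min δ₂ (-t)), lt_min hδ₁pos (lt_min hδ₂pos (by linarith : (0:ℝ) < -t)), ?_⟩
      rintro s ⟨hsS, hsI⟩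
      set δ := min δ₁ (min δ₂ (-t)) with hδdef
      have hδ1 : δ ≤ δ₁ := min_le_left _ _
      have hδ2 : δ ≤ δ₂ := (min_le_right _ _).trans (min_le_left _ _)
      have hδ3 : δ ≤ -t := (min_le_right _ _).trans (min_le_right _ _)
      by_contra hne
      have hne' : s ≠ t := fun h => hne (by simp [h])
      rcases hne'.lt_or_gt with hst | hst
      · -- s < t : use left limit interval (t - δ, t)
        refine key (t - δ) t (L t) ht.le ?_ s ⟨by linarith [hsI.1], hst⟩ hsS
        intro u hu
        have : dist u t < δ₁ := by
          rw [Real.dist_eq, abs_of_neg (by linarith [hu.2] : u - t < 0)]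
          linarith [hu.1]
        exact le_of_lt (by simpa [Real.dist_eq] using hδ₁ hu.2 this)
      · -- t < s : use right limit interval (t, t + δ)
        refine key t (t + δ) (R t) (by linarith) ?_ s ⟨hst, by linarith [hsI.2]⟩ hsS
        intro u hu
        have hu1 : u ∈ Set.Ioi t := hu.1
        have : dist u t < δ₂ := by
          rw [Real.dist_eq, abs_of_pos (by linarith [hu.1] : 0 < u - t)]
          linarith [hu.2]
        exact le_of_lt (by simpa [Real.dist_eq] using hδ₂ hu1 this)
    · -- t = 0 : only the left limit is needed
      subst ht
      obtain ⟨δ, hδpos, hδ⟩ := (Metric.tendsto_nhdsWithin_nhds.mp (hL 0 le_rfl)) (ε/3)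
        (by linarith)
      refine ⟨δ, hδpos, ?_⟩
      rintro s ⟨hsS, hsI⟩
      exfalso
      refine key (0 - δ) 0 (L 0) le_rfl ?_ s ⟨hsI.1, hsS.1⟩ hsS
      intro u hu
      have : dist u 0 < δ := by
        rw [Real.dist_eq, sub_zero, abs_of_neg hu.2]
        linarith [hu.1]
      exact le_of_lt (by simpa [Real.dist_eq] using hδ hu.2 this)
    · -- 0 < t : no point of S ε is near t
      refine ⟨t, ht, ?_⟩
      rintro s ⟨hsS, hsI⟩
      exfalso
      have := hsS.1
      have := hsI.1
      linarith
  refine ⟨{0} ∪ ⋃ n : ℕ, S (1/(n+1)), ?_, ?_⟩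
  · exact (Set.countable_singleton 0).union
      (Set.countable_iUnion fun n => hScount _ (by positivity))
  · intro t ht
    obtain ⟨ht0, htD⟩ := ht
    have ht0' : t < 0 := lt_of_le_of_ne ht0 (fun h => htD (Or.inl (by simp [h])))
    have hnS : ∀ n : ℕ, t ∉ S (1/(n+1)) := fun n hn =>
      htD (Or.inr (Set.mem_iUnion.mpr ⟨n, hn⟩))
    have hLt : φ t = L t := by
      by_contra h
      obtain ⟨n, hn⟩ := exists_nat_one_div_lt (abs_pos.mpr (sub_ne_zero.mpr h))
      exact hnS n ⟨ht0', Or.inl hn.le⟩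
    have hRt : φ t = R t := by
      by_contra h
      obtain ⟨n, hn⟩ := exists_nat_one_div_lt (abs_pos.mpr (sub_ne_zero.mpr h))
      exact hnS n ⟨ht0', Or.inr hn.le⟩
    have hcl : Tendsto φ (𝓝[<] t) (𝓝 (φ t)) := hLt ▸ hL t ht0
    have hcr : Tendsto φ (𝓝[>] t) (𝓝 (φ t)) := hRt ▸ hR' t ht0'
    have hca : ContinuousAt φ t := by
      rw [continuousAt_iff_continuous_left_right]
      exact ⟨continuousWithinAt_Iio_iff_Iic.mp hcl, continuousWithinAt_Ioi_iff_Ici.mp hcr⟩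
    exact hca.continuousWithinAt

/-- A regulated function, shifted, is a.e. strongly measurable on `(-∞, -s]`. -/
lemma regulated_shift_aesm {φ : ℝ → ℝ} (hφ : RegulatedOnIic0 φ) {s : ℝ} (hs : 0 ≤ s) :
    AEStronglyMeasurable (fun θ => φ (θ - s)) (volume.restrict (Set.Iic (-s))) := by
  obtain ⟨D, hDc, hcont⟩ := regulated_countable_discont hφ
  set D' : Set ℝ := (fun u => u + s) '' D with hD'def
  have hD'c : D'.Countable := hDc.image _
  have hcont' : ContinuousOn (fun θ => φ (θ - s)) (Set.Iic (-s) \ D') := by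
    apply hcont.comp ((continuous_sub_right s).continuousOn)
    intro θ hθ
    have h1 : θ ≤ -s := hθ.1
    refine ⟨by simp only [Set.mem_Iic]; linarith, fun hmem => hθ.2 ⟨θ - s, hmem, by ring⟩⟩
  have hmeas : MeasurableSet (Set.Iic (-s) \ D') :=
    measurableSet_Iic.diff hD'c.measurableSet
  have h0 : volume D' = 0 := hD'c.measure_zero _
  have hre : volume.restrict (Set.Iic (-s)) = volume.restrict (Set.Iic (-s) \ D') :=
    (Measure.restrict_congr_set (diff_null_ae_eq_self h0)).symm
  rw [hre]
  exact (hcont'.aemeasurable hmeas).aestronglyMeasurable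

lemma exp_integrableOn_Iic' (b : ℝ) : IntegrableOn Real.exp (Set.Iic b) := by
  refine integrableOn_Iic_of_intervalIntegral_norm_bounded (Real.exp b) b
    (fun i : ℝ => Real.continuous_exp.integrableOn_Ioc) tendsto_neg_atTop_atBot ?_
  refine Filter.Eventually.of_forall fun i => ?_
  rw [intervalIntegral.integral_congr (g := Real.exp)
    (fun u _ => by simp [Real.norm_eq_abs, abs_of_pos (Real.exp_pos u)]),
    integral_exp]
  linarith [Real.exp_pos (-i)]

lemma exp_integral_Iic' (b : ℝ) : (∫ u in Set.Iic b, Real.exp u) = Real.exp b := by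
  have h := integral_Iic_of_hasDerivAt_of_tendsto (f := Real.exp) (f' := Real.exp)
    (a := b) (m := 0) Real.continuous_exp.continuousWithinAt
    (fun u _ => Real.hasDerivAt_exp u) (exp_integrableOn_Iic' b) Real.tendsto_exp_atBot
  simpa using h

/-- the delay functional `ρ` is Lipschitz in its second
variable:
`|ρ(s,y) - ρ(s,x)| ≤ (sup_{θ ≤ 0}|T θ|) (∫_{-∞}^0 e^u du) ‖y - x‖_{BG_q}`
`= (sup_{θ ≤ 0}|T θ|) ‖y - x‖_{BG_q}`. -/
theorem rhoT_lipschitz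
    (Tf : ℝ → ℝ)
    (hTcont : ContinuousOn Tf (Set.Iic 0))
    (hTbdd : ∃ C : ℝ, ∀ θ ≤ (0:ℝ), |Tf θ| ≤ C)
    (hTa : ∃ C : ℝ, ∀ θ ≤ (0:ℝ), |Tf θ| * Real.exp (-θ) ≤ C)
    (hTb : MeasureTheory.IntegrableOn (fun θ => |Tf θ| * Real.exp θ) (Set.Iic 0))
    (hTc : ∃ D : ℝ, 0 < D ∧ ∀ t1, 0 ≤ t1 → ∀ t2, 0 ≤ t2 →
      (∫ θ in Set.Iic (0:ℝ), |Tf (θ - t2) - Tf (θ - t1)|) ≤ D * |t2 - t1|) :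
    ∀ s, 0 ≤ s → ∀ x y : ℝ → ℝ, BGqMem x → BGqMem y →
      |rhoT Tf s y - rhoT Tf s x| ≤
        (sSup ((fun θ => |Tf θ|) '' Set.Iic 0)) *
          (∫ u in Set.Iic (0:ℝ), Real.exp u) * BGqNorm (y - x) ∧
      |rhoT Tf s y - rhoT Tf s x| ≤
        (sSup ((fun θ => |Tf θ|) '' Set.Iic 0)) * BGqNorm (y - x) := by
  obtain ⟨CT, hCT⟩ := hTbdd
  intro s hs x y hx hy
  set M := sSup ((fun θ => |Tf θ|) '' Set.Iic 0) with hMdef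
  set N := BGqNorm (y - x) with hNdef
  have hMbdd : BddAbove ((fun θ => |Tf θ|) '' Set.Iic 0) :=
    ⟨CT, by rintro _ ⟨θ, hθ, rfl⟩; exact hCT θ hθ⟩
  have hM : ∀ θ ≤ (0:ℝ), |Tf θ| ≤ M := fun θ hθ => le_csSup hMbdd ⟨θ, hθ, rfl⟩
  have hM0 : 0 ≤ M := (abs_nonneg _).trans (hM 0 le_rfl)
  obtain ⟨Cx, hCx⟩ := hx.2
  obtain ⟨Cy, hCy⟩ := hy.2
  have hCx' : ∀ u ≤ (0:ℝ), |x u| ≤ Cx * Real.exp u := by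
    intro u hu
    have h1 : |x u| * Real.exp (-u) ≤ Cx := hCx ⟨u, hu, rfl⟩
    have := mul_le_mul_of_nonneg_right h1 (Real.exp_pos u).le
    rw [mul_assoc, ← Real.exp_add, neg_add_cancel, Real.exp_zero, mul_one] at this
    linarith
  have hNbdd : BddAbove ((fun θ => |(y - x) θ| * Real.exp (-θ)) '' Set.Iic 0) := by
    refine ⟨Cy + Cx, ?_⟩
    rintro _ ⟨θ, hθ, rfl⟩
    show |(y - x) θ| * Real.exp (-θ) ≤ Cy + Cx
    have h1 : |y θ| * Real.exp (-θ) ≤ Cy := hCy ⟨θ, hθ, rfl⟩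
    have h2 : |x θ| * Real.exp (-θ) ≤ Cx := hCx ⟨θ, hθ, rfl⟩
    have h3 : |(y - x) θ| ≤ |y θ| + |x θ| := by
      simp only [Pi.sub_apply]; exact abs_sub (y θ) (x θ)
    nlinarith [Real.exp_pos (-θ), abs_nonneg ((y - x) θ)]
  have hNle : ∀ u ≤ (0:ℝ), |y u - x u| * Real.exp (-u) ≤ N := by
    intro u hu
    exact le_csSup hNbdd ⟨u, hu, by simp⟩
  have hN : ∀ u ≤ (0:ℝ), |y u - x u| ≤ N * Real.exp u := by
    intro u hu
    have h1 := hNle u hu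
    have := mul_le_mul_of_nonneg_right h1 (Real.exp_pos u).le
    rw [mul_assoc, ← Real.exp_add, neg_add_cancel, Real.exp_zero, mul_one] at this
    linarith
  have hN0 : 0 ≤ N := le_trans (by positivity) (hNle 0 le_rfl)
  have hIic : Set.Iic (-s) ⊆ Set.Iic (0:ℝ) := Set.Iic_subset_Iic.mpr (by linarith)
  have hTmeas : AEStronglyMeasurable (fun θ => |Tf θ|) (volume.restrict (Set.Iic (-s))) :=
    ((hTcont.mono hIic).abs.aemeasurable measurableSet_Iic).aestronglyMeasurable
  have hdom : Integrable (fun θ => |Tf θ| * Real.exp θ) (volume.restrict (Set.Iic (-s))) :=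
    hTb.mono_set hIic
  have hmeas : ∀ z : ℝ → ℝ, BGqMem z →
      AEStronglyMeasurable (fun θ => |Tf θ| * Real.tanh |z (θ - s)|)
        (volume.restrict (Set.Iic (-s))) := by
    intro z hz
    have h1 := regulated_shift_aesm hz.1 hs
    have h2 : AEStronglyMeasurable (fun θ => Real.tanh |z (θ - s)|)
        (volume.restrict (Set.Iic (-s))) :=
      (tanh_differentiable'.continuous.comp continuous_abs).comp_aestronglyMeasurable h1
    exact hTmeas.mul h2
  have hint : ∀ z : ℝ → ℝ, BGqMem z → (∀ u ≤ (0:ℝ), |z u| ≤ Cx * Real.exp u ∨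
      |z u| ≤ Cy * Real.exp u) →
      Integrable (fun θ => |Tf θ| * Real.tanh |z (θ - s)|)
        (volume.restrict (Set.Iic (-s))) := by
    intro z hz hzb
    refine Integrable.mono' (hdom.const_mul (|Cx| + |Cy|)) (hmeas z hz) ?_
    filter_upwards [ae_restrict_mem measurableSet_Iic] with θ hθ
    have hθ0 : θ ≤ -s := hθ
    have h1 : abs (Real.tanh |z (θ - s)|) ≤ |z (θ - s)| := by
      have := tanh_abs_le' |z (θ - s)|
      simpa [abs_abs] using this
    have h2 : |z (θ - s)| ≤ (|Cx| + |Cy|) * Real.exp (θ - s) := by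
      rcases hzb (θ - s) (by linarith) with h | h
      · refine h.trans ?_
        have := Real.exp_pos (θ - s)
        nlinarith [le_abs_self Cx, abs_nonneg Cy]
      · refine h.trans ?_
        have := Real.exp_pos (θ - s)
        nlinarith [le_abs_self Cy, abs_nonneg Cx]
    have h3 : Real.exp (θ - s) ≤ Real.exp θ := Real.exp_le_exp.mpr (by linarith)
    have h4 : (0:ℝ) ≤ |Cx| + |Cy| := by positivity
    show ‖|Tf θ| * Real.tanh |z (θ - s)|‖ ≤ (|Cx| + |Cy|) * (|Tf θ| * Real.exp θ)
    rw [Real.norm_eq_abs, abs_mul, abs_abs]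
    calc |Tf θ| * abs (Real.tanh |z (θ - s)|)
        ≤ |Tf θ| * ((|Cx| + |Cy|) * Real.exp θ) := by
          refine mul_le_mul_of_nonneg_left ?_ (abs_nonneg _)
          exact h1.trans (h2.trans (mul_le_mul_of_nonneg_left h3 h4))
      _ = (|Cx| + |Cy|) * (|Tf θ| * Real.exp θ) := by ring
  have hCy' : ∀ u ≤ (0:ℝ), |y u| ≤ Cy * Real.exp u := by
    intro u hu
    have h1 : |y u| * Real.exp (-u) ≤ Cy := hCy ⟨u, hu, rfl⟩
    have := mul_le_mul_of_nonneg_right h1 (Real.exp_pos u).le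
    rw [mul_assoc, ← Real.exp_add, neg_add_cancel, Real.exp_zero, mul_one] at this
    linarith
  have hgxi := hint x hx (fun u hu => Or.inl (hCx' u hu))
  have hgyi := hint y hy (fun u hu => Or.inr (hCy' u hu))
  -- the key bound
  have hMNbound : |rhoT Tf s y - rhoT Tf s x| ≤ M * N := by
    have hdiff : rhoT Tf s y - rhoT Tf s x
        = ∫ θ in Set.Iic (-s),
            (|Tf θ| * Real.tanh |x (θ - s)| - |Tf θ| * Real.tanh |y (θ - s)|) := by
      rw [integral_sub hgxi hgyi]
      simp only [rhoT]
      ring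
    rw [hdiff]
    have hdomMN : Integrable (fun θ => M * N * Real.exp θ)
        (volume.restrict (Set.Iic (-s))) := (exp_integrableOn_Iic' (-s)).const_mul (M * N)
    have hbound : ∀ᵐ θ ∂(volume.restrict (Set.Iic (-s))),
        ‖|Tf θ| * Real.tanh |x (θ - s)| - |Tf θ| * Real.tanh |y (θ - s)|‖
          ≤ M * N * Real.exp θ := by
      filter_upwards [ae_restrict_mem measurableSet_Iic] with θ hθ
      have hθ0 : θ ≤ -s := hθ
      have h1 : abs (Real.tanh |x (θ - s)| - Real.tanh |y (θ - s)|)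
          ≤ |x (θ - s) - y (θ - s)| :=
        (tanh_lipschitz' _ _).trans (abs_abs_sub_abs_le_abs_sub _ _)
      have h2 : |x (θ - s) - y (θ - s)| ≤ N * Real.exp (θ - s) := by
        rw [abs_sub_comm]
        exact hN (θ - s) (by linarith)
      have h3 : N * Real.exp (θ - s) ≤ N * Real.exp θ :=
        mul_le_mul_of_nonneg_left (Real.exp_le_exp.mpr (by linarith)) hN0
      rw [Real.norm_eq_abs,
        show |Tf θ| * Real.tanh |x (θ - s)| - |Tf θ| * Real.tanh |y (θ - s)|
          = |Tf θ| * (Real.tanh |x (θ - s)| - Real.tanh |y (θ - s)|) by ring,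
        abs_mul, abs_abs]
      calc |Tf θ| * abs (Real.tanh |x (θ - s)| - Real.tanh |y (θ - s)|)
          ≤ M * (N * Real.exp θ) := by
            refine mul_le_mul (hM θ (by linarith)) (h1.trans (h2.trans h3))
              (abs_nonneg _) hM0
        _ = M * N * Real.exp θ := by ring
    have hb := norm_integral_le_of_norm_le hdomMN hbound
    refine le_trans (by simpa [Real.norm_eq_abs] using hb) ?_
    rw [integral_const_mul, exp_integral_Iic']
    nlinarith [Real.exp_le_one_iff.mpr (by linarith : -s ≤ 0), Real.exp_pos (-s), mul_nonneg hM0 hN0]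
  have hint1 : (∫ u in Set.Iic (0:ℝ), Real.exp u) = 1 := by
    rw [exp_integral_Iic', Real.exp_zero]
  constructor
  · rw [hint1, mul_one]
    exact hMNbound
  · exact hMNbound
end
end

section
/- Let σ > 0 and let x : (−∞, σ] → ℝ be such that x_0 ∈ BG_q and x is regulated on [0, σ], where x_a(θ) := x(a + θ). Then for all s ≥ 0 and all 0 ≤ b ≤ a ≤ σ, the functional f(t, x) = cos²(t) ∫_{−∞}^{0} T(θ) tanh(x(θ)) dθ satisfies |f(s, x_a) − f(s, x_b)| ≤ (2D + sup_{θ ≤ 0} |T(θ)|) · |a − b|, where D is the constant from property (c) of T. -/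
open MeasureTheory Filter Set Topology

noncomputable section

/-! ### Auxiliary lemmas -/

lemma my_abs_tanh_le_one (y : ℝ) : |Real.tanh y| ≤ 1 := by
  rw [Real.tanh_eq_sinh_div_cosh, abs_div, abs_of_pos (Real.cosh_pos y),
    div_le_one (Real.cosh_pos y)]
  nlinarith [Real.cosh_sq_sub_sinh_sq y, sq_abs (Real.sinh y), abs_nonneg (Real.sinh y),
    Real.cosh_pos y]

lemma my_continuous_tanh : Continuous Real.tanh := by
  have h : Real.tanh = fun x => Real.sinh x / Real.cosh x :=
    funext fun x => Real.tanh_eq_sinh_div_cosh x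
  rw [h]
  exact Real.continuous_sinh.div Real.continuous_cosh fun x => (Real.cosh_pos x).ne'

lemma my_countable_right_isolated (s : Set ℝ)
    (h : ∀ t ∈ s, ∃ δ, 0 < δ ∧ ∀ u ∈ Set.Ioo t (t + δ), u ∉ s) : s.Countable := by
  classical
  choose! δ hδpos hmiss using h
  apply Set.PairwiseDisjoint.countable_of_Ioo (y := fun t => t + δ t)
  · intro p hp q hq hpq
    rcases lt_or_gt_of_ne hpq with h' | h'
    · exact Set.disjoint_left.2 fun u hup huq => hmiss p hp q ⟨h', lt_trans huq.1 hup.2⟩ hq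
    · exact Set.disjoint_left.2 fun u hup huq => hmiss q hq p ⟨h', lt_trans hup.1 huq.2⟩ hp
  · intro t ht
    linarith [hδpos t ht]

/-- Translation of a set integral over `Iic c` to one over `Iic 0`. -/
lemma setIntegral_Iic_shift (H : ℝ → ℝ) (c : ℝ) :
    (∫ u in Set.Iic c, H u) = ∫ θ in Set.Iic (0:ℝ), H (c + θ) := by
  rw [← integral_indicator measurableSet_Iic, ← integral_indicator measurableSet_Iic,
    ← MeasureTheory.integral_add_left_eq_self ((Set.Iic c).indicator H) c]
  congr 1
  funext θ
  by_cases hθ : θ ≤ (0:ℝ)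
  · rw [Set.indicator_of_mem (show c + θ ∈ Set.Iic c from Set.mem_Iic.2 (by linarith)),
      Set.indicator_of_mem (Set.mem_Iic.2 hθ)]
  · rw [Set.indicator_of_notMem (show c + θ ∉ Set.Iic c from fun hmem => hθ (by
      have := Set.mem_Iic.1 hmem; linarith)),
      Set.indicator_of_notMem (fun hmem => hθ (Set.mem_Iic.1 hmem))]

lemma integrableOn_exp_shift (C c d : ℝ) :
    MeasureTheory.IntegrableOn (fun u => C * Real.exp (u - c)) (Set.Iic d) := by
  have h := (integrableOn_exp_Iic d).const_mul (C * Real.exp (-c))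
  refine MeasureTheory.IntegrableOn.congr_fun h (fun u _ => ?_) measurableSet_Iic
  rw [sub_eq_add_neg, Real.exp_add]
  ring

/-- A real function having right limits at every point below `σ` is a.e. measurable
on `(-∞, σ]`. -/
lemma aemeasurable_of_right_lim (σ : ℝ) (x : ℝ → ℝ)
    (hR : ∀ t < σ, ∃ l, Filter.Tendsto x (nhdsWithin t (Set.Ioi t)) (nhds l)) :
    AEMeasurable x (volume.restrict (Set.Iic σ)) := by
  classical
  set g : ℝ → ℝ := Function.rightLim x with hgdef
  have hgt : ∀ t, t < σ → Filter.Tendsto x (nhdsWithin t (Set.Ioi t)) (nhds (g t)) := by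
    intro t ht
    obtain ⟨l, hl⟩ := hR t ht
    have hne : (nhdsWithin t (Set.Ioi t)) ≠ ⊥ :=
      (by infer_instance : (nhdsWithin t (Set.Ioi t)).NeBot).ne
    rw [hgdef, rightLim_eq_of_tendsto hl]
    exact hl
  -- approximating sequence from the right
  set sq : ℕ → ℝ → ℝ := fun n t => ((⌊((n:ℝ) + 1) * t⌋ : ℝ) + 1) / ((n:ℝ) + 1) with hsq
  have hmpos : ∀ n : ℕ, (0:ℝ) < (n:ℝ) + 1 := fun n => by positivity
  have hlt : ∀ n t, t < sq n t := by
    intro n t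
    rw [hsq, lt_div_iff₀ (hmpos n), mul_comm]
    exact Int.lt_floor_add_one _
  have hle : ∀ n t, sq n t ≤ t + 1 / ((n:ℝ) + 1) := by
    intro n t
    rw [hsq, div_le_iff₀ (hmpos n)]
    have h1 := Int.floor_le (((n:ℝ) + 1) * t)
    have h2 := hmpos n
    field_simp
    nlinarith
  have hmeas : ∀ n, Measurable (fun t => x (sq n t)) := by
    intro n
    have heq : (fun t => x (sq n t)) =
        (fun k : ℤ => x (((k:ℝ) + 1) / ((n:ℝ) + 1))) ∘ (fun t : ℝ => ⌊((n:ℝ) + 1) * t⌋) := rfl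
    rw [heq]
    exact (measurable_of_countable _).comp (Int.measurable_floor.comp (measurable_id.const_mul _))
  have htendsto : ∀ t, t < σ → Filter.Tendsto (fun n => x (sq n t)) atTop (nhds (g t)) := by
    intro t ht
    apply (hgt t ht).comp
    apply tendsto_nhdsWithin_of_tendsto_nhds_of_eventually_within
    · have h1 : Filter.Tendsto (fun n : ℕ => t + 1 / ((n:ℝ) + 1)) atTop (nhds (t + 0)) :=
        tendsto_const_nhds.add tendsto_one_div_add_atTop_nhds_zero_nat
      rw [add_zero] at h1
      exact tendsto_of_tendsto_of_tendsto_of_le_of_le tendsto_const_nhds h1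
        (fun n => (hlt n t).le) (fun n => hle n t)
    · exact Filter.Eventually.of_forall fun n => hlt n t
  have hgm : AEMeasurable g (volume.restrict (Set.Iio σ)) := by
    refine aemeasurable_of_tendsto_metrizable_ae' (fun n => (hmeas n).aemeasurable) ?_
    rw [ae_restrict_iff' measurableSet_Iio]
    exact ae_of_all _ fun t ht => htendsto t ht
  -- the set where `x` differs from its right-limit function is countable
  have hNcnt : {t : ℝ | t < σ ∧ x t ≠ g t}.Countable := by
    have key : ∀ ε : ℝ, 0 < ε → {t : ℝ | t < σ ∧ ε ≤ |x t - g t|}.Countable := by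
      intro ε hε
      apply my_countable_right_isolated
      rintro t ⟨htσ, -⟩
      have h3 : 0 < ε / 3 := by linarith
      have hev : ∀ᶠ u in nhdsWithin t (Set.Ioi t), |x u - g t| < ε / 3 := by
        have := Metric.tendsto_nhds.1 (hgt t htσ) (ε / 3) h3
        simpa [Real.dist_eq] using this
      obtain ⟨bb, hbb, hsub⟩ := (nhdsGT_basis t).eventually_iff.1 hev
      refine ⟨min (bb - t) (σ - t), by simp [hbb, htσ], ?_⟩
      rintro u ⟨hu1, hu2⟩ ⟨huσ, hεu⟩
      have hub : u < bb := lt_of_lt_of_le hu2 (by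
        have := min_le_left (bb - t) (σ - t); linarith)
      have hxu : |x u - g t| < ε / 3 := hsub ⟨hu1, hub⟩
      have hgu : |g u - g t| ≤ ε / 3 := by
        have htend : Filter.Tendsto (fun v => |x v - g t|) (nhdsWithin u (Set.Ioi u))
            (nhds (|g u - g t|)) := ((hgt u (lt_of_lt_of_le hu2 (by
              have := min_le_right (bb - t) (σ - t); linarith))).sub_const (g t)).abs
        refine le_of_tendsto htend ?_
        filter_upwards [Ioo_mem_nhdsGT_of_mem (⟨le_rfl, hub⟩ : u ∈ Set.Ico u bb)] with v hv
        exact (hsub ⟨lt_trans hu1 hv.1, hv.2⟩).le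
      have hcontr : |x u - g u| < ε := by
        have h4 : |x u - g u| ≤ |x u - g t| + |g u - g t| := by
          have h5 := abs_sub_le (x u) (g t) (g u)
          rwa [abs_sub_comm (g t) (g u)] at h5
        linarith
      linarith
    have hsub2 : {t : ℝ | t < σ ∧ x t ≠ g t} ⊆
        ⋃ n : ℕ, {t : ℝ | t < σ ∧ 1 / ((n:ℝ) + 1) ≤ |x t - g t|} := by
      rintro t ⟨htσ, hne⟩
      have hpos : 0 < |x t - g t| := abs_pos.2 (sub_ne_zero.2 hne)
      obtain ⟨n, hn⟩ := exists_nat_one_div_lt hpos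
      exact Set.mem_iUnion.2 ⟨n, htσ, hn.le⟩
    exact (Set.countable_iUnion fun n => key _ (by positivity)).mono hsub2
  have hae : x =ᵐ[volume.restrict (Set.Iio σ)] g := by
    rw [Filter.EventuallyEq, ae_restrict_iff' measurableSet_Iio, ae_iff]
    refine measure_mono_null ?_ (hNcnt.measure_zero _)
    intro t ht
    simp only [Set.mem_setOf_eq, not_forall] at ht ⊢
    obtain ⟨ht1, ht2⟩ := ht
    exact ⟨ht1, ht2⟩
  have hx' : AEMeasurable x (volume.restrict (Set.Iio σ)) := hgm.congr hae.symm
  rwa [Measure.restrict_congr_set Iio_ae_eq_Iic] at hx'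

/-- for a function `x` with `x₀ ∈ BG_q` that is regulated on
`[0, σ]`, the functional `f` is Lipschitz along shifted histories:
`|f(s, x_a) - f(s, x_b)| ≤ (2D + sup_{θ ≤ 0} |T θ|) |a - b|` for
`0 ≤ b ≤ a ≤ σ` and `s ≥ 0`. -/
theorem fT_history_lipschitz
    (Tf : ℝ → ℝ)
    (hTcont : ContinuousOn Tf (Set.Iic 0))
    (hTbdd : ∃ C : ℝ, ∀ θ ≤ (0:ℝ), |Tf θ| ≤ C)
    (hTa : ∃ C : ℝ, ∀ θ ≤ (0:ℝ), |Tf θ| * Real.exp (-θ) ≤ C)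
    (hTb : MeasureTheory.IntegrableOn (fun θ => |Tf θ| * Real.exp θ) (Set.Iic 0))
    (D : ℝ) (hD : 0 < D)
    (hTc : ∀ t1, 0 ≤ t1 → ∀ t2, 0 ≤ t2 →
      (∫ θ in Set.Iic (0:ℝ), |Tf (θ - t2) - Tf (θ - t1)|) ≤ D * |t2 - t1|)
    (σ : ℝ) (hσ : 0 < σ)
    (x : ℝ → ℝ) (hx0 : BGqMem (history x 0)) (hxreg : RegulatedOnIcc x 0 σ) :
    ∀ s, 0 ≤ s → ∀ a b : ℝ, 0 ≤ b → b ≤ a → a ≤ σ →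
      |fT Tf s (history x a) - fT Tf s (history x b)| ≤
        (2 * D + sSup ((fun θ => |Tf θ|) '' Set.Iic 0)) * |a - b| := by
  intro s hs a b hb hba haσ
  have h0a : (0:ℝ) ≤ a := le_trans hb hba
  have hbσ : b ≤ σ := le_trans hba haσ
  obtain ⟨C, hC⟩ := hTa
  have hTexp : ∀ θ ≤ (0:ℝ), |Tf θ| ≤ C * Real.exp θ := by
    intro θ hθ
    have h1 : |Tf θ| * Real.exp (-θ) * Real.exp θ ≤ C * Real.exp θ :=
      mul_le_mul_of_nonneg_right (hC θ hθ) (Real.exp_pos θ).le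
    rwa [mul_assoc, ← Real.exp_add, neg_add_cancel, Real.exp_zero, mul_one] at h1
  set S := sSup ((fun θ => |Tf θ|) '' Set.Iic 0) with hSdef
  obtain ⟨B, hB⟩ := hTbdd
  have hbddS : BddAbove ((fun θ => |Tf θ|) '' Set.Iic 0) := by
    refine ⟨B, ?_⟩
    rintro y ⟨θ, hθ, rfl⟩
    exact hB θ hθ
  have hSle : ∀ θ ≤ (0:ℝ), |Tf θ| ≤ S := fun θ hθ => le_csSup hbddS ⟨θ, hθ, rfl⟩
  have hS0 : (0:ℝ) ≤ S := le_trans (abs_nonneg _) (hSle 0 le_rfl)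
  -- right limits of x below σ
  have hRlim : ∀ t < σ, ∃ l, Filter.Tendsto x (nhdsWithin t (Set.Ioi t)) (nhds l) := by
    intro t ht
    rcases lt_or_ge t 0 with ht0 | ht0
    · obtain ⟨l, hl⟩ := hx0.1.2 t ht0
      refine ⟨l, ?_⟩
      have hhist : history x 0 = x := by
        funext θ
        simp [history]
      have hl' : Filter.Tendsto x (nhdsWithin t (Set.Ioo t 0)) (nhds l) := by
        rwa [hhist] at hl
      rwa [nhdsWithin_Ioo_eq_nhdsGT ht0] at hl'
    · obtain ⟨l, hl⟩ := hxreg.2 t ⟨ht0, ht⟩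
      exact ⟨l, by rwa [nhdsWithin_Ioc_eq_nhdsGT ht] at hl⟩
  have hxm : AEMeasurable x (volume.restrict (Set.Iic σ)) := aemeasurable_of_right_lim σ x hRlim
  -- integrability of the shifted integrands
  have hInt : ∀ c, 0 ≤ c → c ≤ σ →
      MeasureTheory.IntegrableOn (fun u => Tf (u - c) * Real.tanh (x u)) (Set.Iic c) := by
    intro c hc0 hcσ
    have hxm' : AEMeasurable x (volume.restrict (Set.Iic c)) :=
      hxm.mono_measure (Measure.restrict_mono (Set.Iic_subset_Iic.2 hcσ) le_rfl)
    have hmeas : AEStronglyMeasurable (fun u => Tf (u - c) * Real.tanh (x u))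
        (volume.restrict (Set.Iic c)) := by
      apply AEStronglyMeasurable.mul
      · have hcont : ContinuousOn (fun u => Tf (u - c)) (Set.Iic c) := by
          apply hTcont.comp ((continuous_id.sub continuous_const).continuousOn)
          intro u hu
          have hu' : u ≤ c := Set.mem_Iic.1 hu
          exact Set.mem_Iic.2 (by show u - c ≤ 0; linarith)
        exact hcont.aestronglyMeasurable measurableSet_Iic
      · exact (my_continuous_tanh.measurable.comp_aemeasurable hxm').aestronglyMeasurable
    refine MeasureTheory.Integrable.mono' (integrableOn_exp_shift C c c) hmeas ?_
    filter_upwards [ae_restrict_mem measurableSet_Iic] with u hu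
    have hu' : u - c ≤ 0 := by
      have := Set.mem_Iic.1 hu
      linarith
    have h1 : |Tf (u - c)| ≤ C * Real.exp (u - c) := hTexp _ hu'
    calc ‖Tf (u - c) * Real.tanh (x u)‖ = |Tf (u - c)| * |Real.tanh (x u)| := abs_mul _ _
      _ ≤ (C * Real.exp (u - c)) * 1 :=
          mul_le_mul h1 (my_abs_tanh_le_one _) (abs_nonneg _) (le_trans (abs_nonneg _) h1)
      _ = C * Real.exp (u - c) := mul_one _
  have hIntaa : MeasureTheory.IntegrableOn
      (fun u => Tf (u - a) * Real.tanh (x u)) (Set.Iic a) := hInt a h0a haσ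
  have hIntab : MeasureTheory.IntegrableOn
      (fun u => Tf (u - a) * Real.tanh (x u)) (Set.Iic b) :=
    hIntaa.mono_set (Set.Iic_subset_Iic.2 hba)
  have hIntbb : MeasureTheory.IntegrableOn
      (fun u => Tf (u - b) * Real.tanh (x u)) (Set.Iic b) := hInt b hb hbσ
  -- express fT via the shifted integrals
  have hform : ∀ c : ℝ, fT Tf s (history x c) =
      Real.cos s ^ 2 * ∫ u in Set.Iic c, Tf (u - c) * Real.tanh (x u) := by
    intro c
    rw [fT]
    congr 1
    rw [setIntegral_Iic_shift (fun u => Tf (u - c) * Real.tanh (x u)) c]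
    congr 1
    funext θ
    simp [history, add_sub_cancel_left]
  -- split the integral for a
  have hsplit : (∫ u in Set.Iic a, Tf (u - a) * Real.tanh (x u))
      = (∫ u in Set.Iic b, Tf (u - a) * Real.tanh (x u))
        + ∫ u in Set.Ioc b a, Tf (u - a) * Real.tanh (x u) := by
    rw [← MeasureTheory.setIntegral_union (Set.Iic_disjoint_Ioc le_rfl) measurableSet_Ioc
      hIntab (hIntaa.mono_set Set.Ioc_subset_Iic_self), Set.Iic_union_Ioc_eq_Iic hba]
  have hdiff : fT Tf s (history x a) - fT Tf s (history x b)
      = Real.cos s ^ 2 * ((∫ u in Set.Iic b, (Tf (u - a) - Tf (u - b)) * Real.tanh (x u))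
          + ∫ u in Set.Ioc b a, Tf (u - a) * Real.tanh (x u)) := by
    rw [hform a, hform b, ← mul_sub]
    congr 1
    rw [hsplit]
    have hsub : (∫ u in Set.Iic b, (Tf (u - a) - Tf (u - b)) * Real.tanh (x u))
        = (∫ u in Set.Iic b, Tf (u - a) * Real.tanh (x u))
          - ∫ u in Set.Iic b, Tf (u - b) * Real.tanh (x u) := by
      rw [← MeasureTheory.integral_sub hIntab hIntbb]
      congr 1
      funext u
      ring
    rw [hsub]
    ring
  -- integrability of the difference bound
  have hIntDiff : MeasureTheory.IntegrableOn
      (fun u => |Tf (u - a) - Tf (u - b)|) (Set.Iic b) := by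
    have hca : ContinuousOn (fun u => Tf (u - a)) (Set.Iic b) := by
      apply hTcont.comp ((continuous_id.sub continuous_const).continuousOn)
      intro u hu
      have := Set.mem_Iic.1 hu
      exact Set.mem_Iic.2 (by show u - a ≤ 0; linarith)
    have hcb : ContinuousOn (fun u => Tf (u - b)) (Set.Iic b) := by
      apply hTcont.comp ((continuous_id.sub continuous_const).continuousOn)
      intro u hu
      have := Set.mem_Iic.1 hu
      exact Set.mem_Iic.2 (by show u - b ≤ 0; linarith)
    have hmeas : AEStronglyMeasurable (fun u => |Tf (u - a) - Tf (u - b)|)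
        (volume.restrict (Set.Iic b)) :=
      ((hca.sub hcb).abs).aestronglyMeasurable measurableSet_Iic
    have hbound : MeasureTheory.IntegrableOn
        (fun u => C * Real.exp (u - a) + C * Real.exp (u - b)) (Set.Iic b) :=
      (integrableOn_exp_shift C a b).add (integrableOn_exp_shift C b b)
    refine MeasureTheory.Integrable.mono' hbound hmeas ?_
    filter_upwards [ae_restrict_mem measurableSet_Iic] with u hu
    have hu' := Set.mem_Iic.1 hu
    have h1 : |Tf (u - a)| ≤ C * Real.exp (u - a) := hTexp _ (by linarith)
    have h2 : |Tf (u - b)| ≤ C * Real.exp (u - b) := hTexp _ (by linarith)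
    calc ‖|Tf (u - a) - Tf (u - b)|‖ = |Tf (u - a) - Tf (u - b)| := abs_abs _
      _ ≤ |Tf (u - a)| + |Tf (u - b)| := abs_sub _ _
      _ ≤ C * Real.exp (u - a) + C * Real.exp (u - b) := add_le_add h1 h2
  -- first term bound
  have hterm1 : |∫ u in Set.Iic b, (Tf (u - a) - Tf (u - b)) * Real.tanh (x u)|
      ≤ D * (a - b) := by
    have step1 : |∫ u in Set.Iic b, (Tf (u - a) - Tf (u - b)) * Real.tanh (x u)|
        ≤ ∫ u in Set.Iic b, |Tf (u - a) - Tf (u - b)| := by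
      calc |∫ u in Set.Iic b, (Tf (u - a) - Tf (u - b)) * Real.tanh (x u)|
          = ‖∫ u in Set.Iic b, (Tf (u - a) - Tf (u - b)) * Real.tanh (x u)‖ :=
            (Real.norm_eq_abs _).symm
        _ ≤ ∫ u in Set.Iic b, ‖(Tf (u - a) - Tf (u - b)) * Real.tanh (x u)‖ :=
            MeasureTheory.norm_integral_le_integral_norm _
        _ ≤ ∫ u in Set.Iic b, |Tf (u - a) - Tf (u - b)| := by
            refine MeasureTheory.integral_mono_of_nonneg
              (ae_of_all _ fun u => norm_nonneg _) hIntDiff (ae_of_all _ fun u => ?_)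
            calc ‖(Tf (u - a) - Tf (u - b)) * Real.tanh (x u)‖
                = |Tf (u - a) - Tf (u - b)| * |Real.tanh (x u)| := abs_mul _ _
              _ ≤ |Tf (u - a) - Tf (u - b)| * 1 :=
                  mul_le_mul_of_nonneg_left (my_abs_tanh_le_one _) (abs_nonneg _)
              _ = |Tf (u - a) - Tf (u - b)| := mul_one _
    have step2 : (∫ u in Set.Iic b, |Tf (u - a) - Tf (u - b)|)
        = ∫ θ in Set.Iic (0:ℝ), |Tf (θ - (a - b)) - Tf (θ - 0)| := by
      rw [setIntegral_Iic_shift (fun u => |Tf (u - a) - Tf (u - b)|) b]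
      congr 1
      funext θ
      rw [show b + θ - a = θ - (a - b) by ring, show b + θ - b = θ - 0 by ring]
    have step3 := hTc 0 le_rfl (a - b) (by linarith)
    rw [sub_zero, abs_of_nonneg (by linarith : (0:ℝ) ≤ a - b)] at step3
    calc |∫ u in Set.Iic b, (Tf (u - a) - Tf (u - b)) * Real.tanh (x u)|
        ≤ ∫ u in Set.Iic b, |Tf (u - a) - Tf (u - b)| := step1
      _ = ∫ θ in Set.Iic (0:ℝ), |Tf (θ - (a - b)) - Tf (θ - 0)| := step2
      _ ≤ D * (a - b) := step3
  -- second term bound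
  have hterm2 : |∫ u in Set.Ioc b a, Tf (u - a) * Real.tanh (x u)| ≤ S * (a - b) := by
    have hconst : MeasureTheory.IntegrableOn (fun _ : ℝ => S) (Set.Ioc b a) := by
      refine MeasureTheory.integrableOn_const ?_ (by simp)
      rw [Real.volume_Ioc]
      exact ENNReal.ofReal_lt_top.ne
    have step1 : |∫ u in Set.Ioc b a, Tf (u - a) * Real.tanh (x u)|
        ≤ ∫ _ in Set.Ioc b a, S := by
      calc |∫ u in Set.Ioc b a, Tf (u - a) * Real.tanh (x u)|
          = ‖∫ u in Set.Ioc b a, Tf (u - a) * Real.tanh (x u)‖ := (Real.norm_eq_abs _).symm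
        _ ≤ ∫ u in Set.Ioc b a, ‖Tf (u - a) * Real.tanh (x u)‖ :=
            MeasureTheory.norm_integral_le_integral_norm _
        _ ≤ ∫ _ in Set.Ioc b a, S := by
            refine MeasureTheory.integral_mono_of_nonneg
              (ae_of_all _ fun u => norm_nonneg _) hconst ?_
            filter_upwards [ae_restrict_mem measurableSet_Ioc] with u hu
            have hua : u - a ≤ 0 := by
              have := hu.2
              linarith
            calc ‖Tf (u - a) * Real.tanh (x u)‖
                = |Tf (u - a)| * |Real.tanh (x u)| := abs_mul _ _
              _ ≤ S * 1 := mul_le_mul (hSle _ hua) (my_abs_tanh_le_one _) (abs_nonneg _) hS0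
              _ = S := mul_one _
    have step2 : (∫ _ in Set.Ioc b a, S) = S * (a - b) := by
      rw [MeasureTheory.setIntegral_const, measureReal_def, Real.volume_Ioc,
        ENNReal.toReal_ofReal (by linarith : (0:ℝ) ≤ a - b), smul_eq_mul, mul_comm]
    rw [step2] at step1
    exact step1
  -- assembly
  have hcos : Real.cos s ^ 2 ≤ 1 := by
    nlinarith [Real.cos_le_one s, Real.neg_one_le_cos s]
  rw [hdiff, abs_mul, abs_of_nonneg (sq_nonneg (Real.cos s))]
  calc Real.cos s ^ 2 * |(∫ u in Set.Iic b, (Tf (u - a) - Tf (u - b)) * Real.tanh (x u))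
          + ∫ u in Set.Ioc b a, Tf (u - a) * Real.tanh (x u)|
      ≤ 1 * |(∫ u in Set.Iic b, (Tf (u - a) - Tf (u - b)) * Real.tanh (x u))
          + ∫ u in Set.Ioc b a, Tf (u - a) * Real.tanh (x u)| :=
        mul_le_mul_of_nonneg_right hcos (abs_nonneg _)
    _ = |(∫ u in Set.Iic b, (Tf (u - a) - Tf (u - b)) * Real.tanh (x u))
          + ∫ u in Set.Ioc b a, Tf (u - a) * Real.tanh (x u)| := one_mul _
    _ ≤ |∫ u in Set.Iic b, (Tf (u - a) - Tf (u - b)) * Real.tanh (x u)|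
          + |∫ u in Set.Ioc b a, Tf (u - a) * Real.tanh (x u)| := abs_add_le _ _
    _ ≤ D * (a - b) + S * (a - b) := add_le_add hterm1 hterm2
    _ ≤ (2 * D + S) * (a - b) := by nlinarith
    _ = (2 * D + S) * |a - b| := by
        rw [abs_of_nonneg (by linarith : (0:ℝ) ≤ a - b)]
end
end
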